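/- Every bounded semilinear language is in ℒ(NCM(BD_iLB_d)) and in ℒ(NCM(LB_iBD_d)). -/

import Mathlib

set_option maxHeartbeats 1000000

/-! ### Basic machinery: counter machines, instruction languages, language families -/

/-- The instruction alphabet `Δ_k = {C_1, D_1, …, C_k, D_k}`. -/
inductive Instr (k : ℕ) : Type
  | C : Fin k → Instr k
  | D : Fin k → Instr k
deriving DecidableEq

namespace Instr

/-- `x` is an increment symbol `C_i` (i.e. belongs to `Δ_(k,c)`). -/
def isInc {k : ℕ} : Instr k → Prop
  | C _ => True
  | D _ => False

/-- `x` is a decrement symbol `D_i` (i.e. belongs to `Δ_(k,d)`). -/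
def isDec {k : ℕ} : Instr k → Prop
  | C _ => False
  | D _ => True

end Instr

/-- A transition of a one-way nondeterministic `k`-counter machine with `n` states
over input alphabet `A`.  `test i = true` means the transition requires counter `i`
to be positive, `test i = false` requires it to be zero.  `delta` gives the counter
changes (each in `{-1,0,1}`). -/
structure CTrans (k n : ℕ) (A : Type) where
  src : Fin n
  input : Option A
  test : Fin k → Bool
  dst : Fin n
  delta : Fin k → ℤ

/-- A one-way nondeterministic `k`-counter machine. -/
structure NCMachine (k : ℕ) (A : Type) where
  n : ℕ
  start : Fin n
  final : Set (Fin n)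
  trans : Set (CTrans k n A)

namespace NCMachine

variable {k : ℕ} {A : Type}

/-- Configurations: current state, remaining input, counter contents. -/
abbrev Config (M : NCMachine k A) : Type := Fin M.n × List A × (Fin k → ℕ)

/-- A single computation step using transition `t`. -/
def Step (M : NCMachine k A) (t : CTrans k M.n A) (c c' : M.Config) : Prop :=
  t ∈ M.trans ∧ c.1 = t.src ∧ c'.1 = t.dst ∧
    (∀ i, t.test i = true ↔ 0 < c.2.2 i) ∧
    (∀ i, t.delta i = -1 ∨ t.delta i = 0 ∨ t.delta i = 1) ∧
    (∀ i, (c'.2.2 i : ℤ) = (c.2.2 i : ℤ) + t.delta i) ∧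
    (match t.input with
      | none => c'.2.1 = c.2.1
      | some a => c.2.1 = a :: c'.2.1)

/-- Derivation along a list of transitions. -/
def Derives (M : NCMachine k A) : List (CTrans k M.n A) → M.Config → M.Config → Prop
  | [], c, c' => c' = c
  | t :: ts, c, c'' => ∃ c', M.Step t c c' ∧ M.Derives ts c' c''

/-- The initial configuration on input `w`. -/
def initConfig (M : NCMachine k A) (w : List A) : M.Config :=
  (M.start, w, fun _ => 0)

/-- `ts` is a computation of `M` accepting `w` (ending in a final state with the
input consumed). -/
def Accepts (M : NCMachine k A) (ts : List (CTrans k M.n A)) (w : List A) : Prop :=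
  ∃ (q : Fin M.n) (cnt : Fin k → ℕ), q ∈ M.final ∧ M.Derives ts (M.initConfig w) (q, [], cnt)

/-- `ts` is a computation of `M` accepting `w` ending with all counters zero. -/
def AcceptsZ (M : NCMachine k A) (ts : List (CTrans k M.n A)) (w : List A) : Prop :=
  ∃ q : Fin M.n, q ∈ M.final ∧ M.Derives ts (M.initConfig w) (q, [], fun _ => 0)

/-- The language accepted by `M`. -/
def lang (M : NCMachine k A) : Language A := {w | ∃ ts, M.Accepts ts w}

end NCMachine

/-- The instruction recorded by a single transition: `C_i` for an increment of
counter `i`, `D_i` for a decrement of counter `i`, nothing otherwise. -/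
def CTrans.instr {k n : ℕ} {A : Type} (t : CTrans k n A) : List (Instr k) :=
  ((List.finRange k).map fun i =>
    if t.delta i = 1 then [Instr.C i] else if t.delta i = -1 then [Instr.D i] else []).flatten

/-- The homomorphism `h_Δ` recording the counter instructions of a transition sequence. -/
def hDelta {k n : ℕ} {A : Type} (ts : List (CTrans k n A)) : List (Instr k) :=
  (ts.map CTrans.instr).flatten

/-- The homomorphism `h_Σ` recording the input letters read by a transition sequence. -/
def hSigma {k n : ℕ} {A : Type} (ts : List (CTrans k n A)) : List A :=
  ts.filterMap CTrans.input

/-- In `w`, for every `i`, every occurrence of `C_i` precedes every occurrence of `D_i`. -/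
def IncBeforeDec {k : ℕ} (w : List (Instr k)) : Prop :=
  ∀ (i : Fin k) (x y z : List (Instr k)), w ≠ x ++ Instr.D i :: (y ++ Instr.C i :: z)

/-- A `k`-counter machine is *well-formed* if every transition changes at most one
counter, and in every accepting computation all counters finish at zero and each
counter is 1-reversal-bounded (all increments precede all decrements). -/
def NCMachine.WellFormed {k : ℕ} {A : Type} (M : NCMachine k A) : Prop :=
  (∀ t ∈ M.trans, ∀ i j : Fin k, t.delta i ≠ 0 → t.delta j ≠ 0 → i = j) ∧
  (∀ (w : List A) (ts : List (CTrans k M.n A)) (q : Fin M.n) (cnt : Fin k → ℕ),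
      q ∈ M.final → M.Derives ts (M.initConfig w) (q, [], cnt) →
      cnt = (fun _ => 0) ∧ IncBeforeDec (hDelta ts))

/-- `M` satisfies the instruction language `I` if every accepting computation has its
instruction sequence in `I`. -/
def NCMachine.Satisfies {k : ℕ} {A : Type} (M : NCMachine k A) (I : Language (Instr k)) : Prop :=
  ∀ (w : List A) (ts : List (CTrans k M.n A)), M.AcceptsZ ts w → hDelta ts ∈ I

/-! ### Language families, full trios -/

/-- A family of languages: for every alphabet, a set of languages over it. -/
abbrev LangFamily : Type 1 := ∀ A : Type, Set (Language A)

/-- The extension of a map `h : A → List B` to a (monoid) homomorphism on words. -/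
def homWord {A B : Type} (h : A → List B) (w : List A) : List B := (w.map h).flatten


/-- Intersection of two languages. -/
def interLang {A : Type} (L R : Language A) : Language A := {w | w ∈ L ∧ w ∈ R}

/-- Union of two languages. -/
def unionLang {A : Type} (L R : Language A) : Language A := {w | w ∈ L ∨ w ∈ R}

/-- `L` is a regular language. -/
def RegularLang {A : Type} (L : Language A) : Prop :=
  ∃ (n : ℕ) (M : DFA A (Fin n)), L = M.accepts

/-- A full trio: a family of languages closed under homomorphism, inverse
homomorphism, and intersection with regular languages. -/
structure IsFullTrio (F : LangFamily) : Prop where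
  hom_mem : ∀ (A B : Type) (h : A → List B) (L : Language A),
      L ∈ F A → (homWord h '' L) ∈ F B
  invHom_mem : ∀ (A B : Type) (h : A → List B) (L : Language B),
      L ∈ F B → (homWord h ⁻¹' L) ∈ F A
  interReg_mem : ∀ (A : Type) (L R : Language A),
      L ∈ F A → RegularLang R → interLang L R ∈ F A

/-- A full semi-AFL: a full trio closed under union. -/
def IsFullSemiAFL (F : LangFamily) : Prop :=
  IsFullTrio F ∧ ∀ (A : Type) (L₁ L₂ : Language A), L₁ ∈ F A → L₂ ∈ F A → unionLang L₁ L₂ ∈ F A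

/-- `F` is the smallest full trio containing (every language of every alphabet in) `G`. -/
def IsSmallestFullTrioOver (F G : LangFamily) : Prop :=
  IsFullTrio F ∧ (∀ A : Type, G A ⊆ F A) ∧
    ∀ F' : LangFamily, IsFullTrio F' → (∀ A : Type, G A ⊆ F' A) → ∀ A : Type, F A ⊆ F' A

/-- Closure under intersection. -/
def IntersectionClosed (F : LangFamily) : Prop :=
  ∀ (A : Type) (L₁ L₂ : Language A), L₁ ∈ F A → L₂ ∈ F A → interLang L₁ L₂ ∈ F A

/-- `w` is a shuffle of `u` and `v`. -/
inductive IsShuffle {A : Type} : List A → List A → List A → Prop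
  | nil : IsShuffle [] [] []
  | left {a : A} {u v w : List A} : IsShuffle u v w → IsShuffle (a :: u) v (a :: w)
  | right {a : A} {u v w : List A} : IsShuffle u v w → IsShuffle u (a :: v) (a :: w)

/-- The shuffle of two languages. -/
def shuffleLang {A : Type} (L₁ L₂ : Language A) : Language A :=
  {w | ∃ u ∈ L₁, ∃ v ∈ L₂, IsShuffle u v w}

/-- Closure under shuffle. -/
def ShuffleClosed (F : LangFamily) : Prop :=
  ∀ (A : Type) (L₁ L₂ : Language A), L₁ ∈ F A → L₂ ∈ F A → shuffleLang L₁ L₂ ∈ F A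

/-! ### Bounded-language builders -/

/-- The word `a₁^{n₁} ⋯ a_m^{n_m}`. -/
def lettersPow {A : Type} (as : List A) (ns : Fin as.length → ℕ) : List A :=
  (List.ofFn fun j => List.replicate (ns j) (as.get j)).flatten

/-- The letter-bounded language `a₁^* ⋯ a_m^*`. -/
def letterLang {A : Type} (as : List A) : Language A :=
  {w | ∃ ns : Fin as.length → ℕ, w = lettersPow as ns}

/-- The word `w₁^{n₁} ⋯ w_m^{n_m}`. -/
def wordsPow {A : Type} (ws : List (List A)) (ns : Fin ws.length → ℕ) : List A :=
  (List.ofFn fun j => (List.replicate (ns j) (ws.get j)).flatten).flatten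

/-- The bounded language `w₁^* ⋯ w_m^*`. -/
def boundedLang {A : Type} (ws : List (List A)) : Language A :=
  {w | ∃ ns : Fin ws.length → ℕ, w = wordsPow ws ns}

/-- All words over the increment sub-alphabet `Δ_(k,c)`. -/
def incWords {k : ℕ} : Language (Instr k) := {w | ∀ a ∈ w, a.isInc}

/-- All words over the decrement sub-alphabet `Δ_(k,d)`. -/
def decWords {k : ℕ} : Language (Instr k) := {w | ∀ a ∈ w, a.isDec}

/-- Every word of `I` has all `C_i` before any `D_i`. -/
def AllIncBeforeDec {k : ℕ} (I : Language (Instr k)) : Prop := ∀ w ∈ I, IncBeforeDec w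

/-! ### Instruction language families -/

/-- A family of instruction languages (one set of languages over `Δ_k` for each `k`). -/
abbrev InstrFam : Type := ∀ k : ℕ, Set (Language (Instr k))

/-- The stratified condition on a sequence of letters of `Δ_k`. -/
def Stratified {k : ℕ} (as : List (Instr k)) : Prop :=
  ∀ (l l' j j' : Fin as.length) (r s : Fin k),
    l < l' → l' < j → j < j' →
    as.get l = Instr.C r → as.get l' = Instr.C s →
    as.get j = Instr.D r → as.get j' = Instr.D s → r = s

/-- Letter-bounded instruction languages `LB`. -/
def famLB : InstrFam := fun k =>
  {I | (∃ as : List (Instr k), I = letterLang as) ∧ AllIncBeforeDec I}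

/-- Stratified letter-bounded instruction languages `StLB`. -/
def famStLB : InstrFam := fun k =>
  {I | (∃ as : List (Instr k), Stratified as ∧ I = letterLang as) ∧ AllIncBeforeDec I}

/-- Letter-bounded-increasing/letter-bounded-decreasing instruction languages `LB_iLB_d`. -/
def famLBiLBd : InstrFam := fun k =>
  {I | (∃ as bs : List (Instr k), (∀ a ∈ as, a.isInc) ∧ (∀ b ∈ bs, b.isDec) ∧
        I = letterLang as * letterLang bs) ∧ AllIncBeforeDec I}

/-- Bounded instruction languages `BD`. -/
def famBD : InstrFam := fun k =>
  {I | (∃ ws : List (List (Instr k)), I = boundedLang ws) ∧ AllIncBeforeDec I}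

/-- Bounded-increasing/letter-bounded-decreasing instruction languages `BD_iLB_d`. -/
def famBDiLBd : InstrFam := fun k =>
  {I | (∃ (ws : List (List (Instr k))) (bs : List (Instr k)),
        (∀ u ∈ ws, ∀ a ∈ u, a.isInc) ∧ (∀ b ∈ bs, b.isDec) ∧
        I = boundedLang ws * letterLang bs) ∧ AllIncBeforeDec I}

/-- Letter-bounded-increasing/bounded-decreasing instruction languages `LB_iBD_d`. -/
def famLBiBDd : InstrFam := fun k =>
  {I | (∃ (as : List (Instr k)) (ws : List (List (Instr k))),
        (∀ a ∈ as, a.isInc) ∧ (∀ u ∈ ws, ∀ b ∈ u, b.isDec) ∧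
        I = letterLang as * boundedLang ws) ∧ AllIncBeforeDec I}

/-- Letter-bounded-decreasing instruction languages `LB_d`. -/
def famLBd : InstrFam := fun k =>
  {I | (∃ bs : List (Instr k), (∀ b ∈ bs, b.isDec) ∧
        I = shuffleLang incWords (letterLang bs)) ∧ AllIncBeforeDec I}

/-- Letter-bounded-increasing instruction languages `LB_i`. -/
def famLBi : InstrFam := fun k =>
  {I | (∃ as : List (Instr k), (∀ a ∈ as, a.isInc) ∧
        I = shuffleLang (letterLang as) decWords) ∧ AllIncBeforeDec I}

/-- `LB_∪ = LB_d ∪ LB_i`. -/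
def famLBcup : InstrFam := fun k => famLBd k ∪ famLBi k

/-- The unrestricted instruction family `ALL = {Δ_k^*}`. -/
def famALL : InstrFam := fun k => {I : Language (Instr k) | I = Set.univ}

/-! #### Underlined ("distinct") variants -/

/-- `u-LB`: each letter of `Δ_k` occurs exactly once. -/
def famULB : InstrFam := fun k =>
  {I | (∃ as : List (Instr k), (∀ x : Instr k, as.count x = 1) ∧ I = letterLang as) ∧
        AllIncBeforeDec I}

/-- `u-StLB`. -/
def famUStLB : InstrFam := fun k =>
  {I | (∃ as : List (Instr k), (∀ x : Instr k, as.count x = 1) ∧ Stratified as ∧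
        I = letterLang as) ∧ AllIncBeforeDec I}

/-- `u-LB_i u-LB_d`. -/
def famULBiULBd : InstrFam := fun k =>
  {I | (∃ as bs : List (Instr k),
        (∀ a ∈ as, a.isInc) ∧ (∀ i : Fin k, as.count (Instr.C i) = 1) ∧
        (∀ b ∈ bs, b.isDec) ∧ (∀ i : Fin k, bs.count (Instr.D i) = 1) ∧
        I = letterLang as * letterLang bs) ∧ AllIncBeforeDec I}

/-- `u-BD_i u-LB_d`. -/
def famUBDiULBd : InstrFam := fun k =>
  {I | (∃ (ws : List (List (Instr k))) (bs : List (Instr k)),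
        (∀ u ∈ ws, ∀ a ∈ u, a.isInc) ∧ (∀ i : Fin k, ws.flatten.count (Instr.C i) = 1) ∧
        (∀ b ∈ bs, b.isDec) ∧ (∀ i : Fin k, bs.count (Instr.D i) = 1) ∧
        I = boundedLang ws * letterLang bs) ∧ AllIncBeforeDec I}

/-- `u-LB_i u-BD_d`. -/
def famULBiUBDd : InstrFam := fun k =>
  {I | (∃ (as : List (Instr k)) (ws : List (List (Instr k))),
        (∀ a ∈ as, a.isInc) ∧ (∀ i : Fin k, as.count (Instr.C i) = 1) ∧
        (∀ u ∈ ws, ∀ b ∈ u, b.isDec) ∧ (∀ i : Fin k, ws.flatten.count (Instr.D i) = 1) ∧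
        I = letterLang as * boundedLang ws) ∧ AllIncBeforeDec I}

/-- `u-LB_d`. -/
def famULBd : InstrFam := fun k =>
  {I | (∃ bs : List (Instr k), (∀ b ∈ bs, b.isDec) ∧ (∀ i : Fin k, bs.count (Instr.D i) = 1) ∧
        I = shuffleLang incWords (letterLang bs)) ∧ AllIncBeforeDec I}

/-- `u-LB_i`. -/
def famULBi : InstrFam := fun k =>
  {I | (∃ as : List (Instr k), (∀ a ∈ as, a.isInc) ∧ (∀ i : Fin k, as.count (Instr.C i) = 1) ∧
        I = shuffleLang (letterLang as) decWords) ∧ AllIncBeforeDec I}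

/-- `SBD`: bounded instructions in which each word has length at most 2. -/
def famSBD : InstrFam := fun k =>
  {I | (∃ ws : List (List (Instr k)), (∀ u ∈ ws, u ≠ [] ∧ u.length ≤ 2) ∧
        I = boundedLang ws) ∧ AllIncBeforeDec I}

/-! ### The language families `ℒ(NCM(k,𝓘))` and `ℒ(NCM(𝓘))` -/

/-- Languages accepted by well-formed `k`-counter machines satisfying some `I ∈ 𝓘k`. -/
def NCMLangK (k : ℕ) (𝓘k : Set (Language (Instr k))) : LangFamily :=
  fun A => {L | ∃ M : NCMachine k A, M.WellFormed ∧ (∃ I ∈ 𝓘k, M.Satisfies I) ∧ M.lang = L}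

/-- Languages accepted by well-formed `𝓘`-instruction machines (over all `k ≥ 1`). -/
def NCMLang (𝓘 : InstrFam) : LangFamily :=
  fun A => {L | ∃ k : ℕ, 0 < k ∧ L ∈ NCMLangK k (𝓘 k) A}

/-- For `I ⊆ Δ_k^*`, the sub-language `I_eq` of words with equally many `C_i` as `D_i`
for each `i`, in which every `C_i` occurs before any `D_i`. -/
def eqPart {k : ℕ} (I : Language (Instr k)) : Language (Instr k) :=
  {w | w ∈ I ∧ (∀ i : Fin k, w.count (Instr.C i) = w.count (Instr.D i)) ∧ IncBeforeDec w}

/-! ### Reversal-bounded machines and `ℒ(NCM)` -/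

/-- The number of alternations between increasing and decreasing in a sequence of
counter changes. -/
def signChanges (ds : List ℤ) : ℕ :=
  let nz := ds.filter fun d => d != 0
  ((nz.zip nz.tail).filter fun p => decide (p.1 * p.2 < 0)).length

/-- `M` is reversal-bounded: in accepting computations each counter alternates between
nondecreasing and nonincreasing a bounded number of times. -/
def NCMachine.RevBounded {k : ℕ} {A : Type} (M : NCMachine k A) : Prop :=
  ∃ l : ℕ, ∀ (w : List A) (ts : List (CTrans k M.n A)), M.Accepts ts w →
    ∀ i : Fin k, signChanges (ts.map fun t => t.delta i) ≤ l

/-- `ℒ(NCM)`: languages of one-way nondeterministic reversal-bounded multicounter machines. -/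
def NCMFull : LangFamily :=
  fun A => {L | ∃ (k : ℕ) (M : NCMachine k A), M.RevBounded ∧ M.lang = L}

/-! ### Semilinear sets and bounded semilinear languages -/

/-- The linear set with constant `v0` and periods `ps`. -/
def linearSet {β : Type} (v0 : β → ℕ) (ps : List (β → ℕ)) : Set (β → ℕ) :=
  {v | ∃ c : Fin ps.length → ℕ, v = fun t => v0 t + ∑ j : Fin ps.length, c j * ps.get j t}

/-- `Q` is a semilinear set. -/
def IsSemilinear {β : Type} (Q : Set (β → ℕ)) : Prop :=
  ∃ comps : List ((β → ℕ) × List (β → ℕ)),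
    Q = {v | ∃ c ∈ comps, v ∈ linearSet c.1 c.2}

/-- `L` is a bounded (Ginsburg) semilinear language. -/
def IsBoundedSemilinear {A : Type} (L : Language A) : Prop :=
  ∃ ws : List (List A), (∀ u ∈ ws, u ≠ []) ∧
    ∃ Q : Set (Fin ws.length → ℕ), IsSemilinear Q ∧
      L = {w | ∃ v ∈ Q, w = wordsPow ws v}

/-- The Parikh image of a word. -/
noncomputable def parikh {A : Type} (w : List A) : A → ℕ :=
  fun a => Nat.card {j : Fin w.length // w.get j = a}

/-- `L` is a bounded Parikh semilinear language. -/
noncomputable def IsBoundedParikhSemilinear {A : Type} (L : Language A) : Prop :=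
  ∃ ws : List (List A), (∀ u ∈ ws, u ≠ []) ∧
    ∃ Q : Set (A → ℕ), IsSemilinear Q ∧
      L = {w | (∃ ns : Fin ws.length → ℕ, w = wordsPow ws ns) ∧ parikh w ∈ Q}

/-- The reversal of a language. -/
def revLang {A : Type} (L : Language A) : Language A := {w | w.reverse ∈ L}


/-! ### Auxiliary machinery for Statement 14 -/

section Stmt14Aux

/-- Actions of a program machine. -/
inductive Act (k : ℕ) (A : Type) : Type
  | inc : Fin k → Act k A
  | dec : Fin k → Act k A
  | read : A → Act k A

namespace Act
variable {k : ℕ} {A : Type}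

def aDelta : Act k A → Fin k → ℤ
  | inc t => fun i => if i = t then 1 else 0
  | dec t => fun i => if i = t then -1 else 0
  | read _ => fun _ => 0

def aInput : Act k A → List A
  | read a => [a]
  | _ => []

def aInstr : Act k A → List (Instr k)
  | inc t => [Instr.C t]
  | dec t => [Instr.D t]
  | read _ => []

def aOpt : Act k A → Option A
  | read a => some a
  | _ => none

end Act

def inWord {k : ℕ} {A : Type} (α : List (Act k A)) : List A := (α.map Act.aInput).flatten

def instrWord {k : ℕ} {A : Type} (α : List (Act k A)) : List (Instr k) := (α.map Act.aInstr).flatten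

def dsum {k : ℕ} {A : Type} (α : List (Act k A)) (t : Fin k) : ℤ :=
  (α.map (fun a => Act.aDelta a t)).sum

@[simp] lemma inWord_nil {k : ℕ} {A : Type} : inWord ([] : List (Act k A)) = [] := rfl
@[simp] lemma instrWord_nil {k : ℕ} {A : Type} : instrWord ([] : List (Act k A)) = [] := rfl
@[simp] lemma dsum_nil {k : ℕ} {A : Type} (t : Fin k) : dsum ([] : List (Act k A)) t = 0 := rfl

@[simp] lemma inWord_append {k : ℕ} {A : Type} (α β : List (Act k A)) :
    inWord (α ++ β) = inWord α ++ inWord β := by simp [inWord]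

@[simp] lemma instrWord_append {k : ℕ} {A : Type} (α β : List (Act k A)) :
    instrWord (α ++ β) = instrWord α ++ instrWord β := by simp [instrWord]

@[simp] lemma dsum_append {k : ℕ} {A : Type} (α β : List (Act k A)) (t : Fin k) :
    dsum (α ++ β) t = dsum α t + dsum β t := by simp [dsum]

@[simp] lemma inWord_cons {k : ℕ} {A : Type} (a : Act k A) (α : List (Act k A)) :
    inWord (a :: α) = a.aInput ++ inWord α := by simp [inWord]

@[simp] lemma instrWord_cons {k : ℕ} {A : Type} (a : Act k A) (α : List (Act k A)) :
    instrWord (a :: α) = a.aInstr ++ instrWord α := by simp [instrWord]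

@[simp] lemma dsum_cons {k : ℕ} {A : Type} (a : Act k A) (α : List (Act k A)) (t : Fin k) :
    dsum (a :: α) t = a.aDelta t + dsum α t := by simp [dsum]

/-- Items and programs. -/
abbrev PItem (k : ℕ) (A : Type) : Type := List (Act k A) × Bool
abbrev Prog (k : ℕ) (A : Type) : Type := List (PItem k A)

namespace PM

variable {k : ℕ} {A : Type} (PL : List (Prog k A))

def prog (p : ℕ) : Prog k A := PL.getD p []
def item (p i : ℕ) : PItem k A := (prog PL p).getD i ([], false)
def word (p i : ℕ) : List (Act k A) := (item PL p i).1
def star (p i : ℕ) : Bool := (item PL p i).2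
def np (p : ℕ) : ℕ := (prog PL p).length

lemma prog_eq {p : ℕ} (hp : p < PL.length) : prog PL p = PL[p] := by
  simp [prog, List.getD, List.getElem?_eq_getElem hp]

lemma prog_default {p : ℕ} (hp : ¬ p < PL.length) : prog PL p = [] := by
  simp [prog, List.getD, List.getElem?_eq_none (le_of_not_gt hp)]

lemma prog_mem {p : ℕ} (hp : p < PL.length) : prog PL p ∈ PL := by
  rw [prog_eq PL hp]; exact List.getElem_mem _

lemma item_eq {p i : ℕ} (hi : i < np PL p) : item PL p i = (prog PL p)[i] := by
  simp [item, List.getD, List.getElem?_eq_getElem hi]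

lemma item_default {p i : ℕ} (hi : ¬ i < np PL p) : item PL p i = ([], false) := by
  simp [item, List.getD, List.getElem?_eq_none (le_of_not_gt hi)]

lemma item_mem {p i : ℕ} (hi : i < np PL p) : item PL p i ∈ prog PL p := by
  rw [item_eq PL hi]; exact List.getElem_mem _

lemma p_lt_of_np_pos {p : ℕ} (h : 0 < np PL p) : p < PL.length := by
  by_contra hc
  rw [np, prog_default PL hc] at h
  simp at h

def nI : ℕ := (PL.map List.length).foldr max 0
def nW : ℕ := ((PL.flatten.map (fun it => it.1.length))).foldr max 0

lemma le_foldr_max {l : List ℕ} {x : ℕ} (h : x ∈ l) : x ≤ l.foldr max 0 := by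
  induction l with
  | nil => cases h
  | cons a l ih =>
    rcases List.mem_cons.1 h with h | h
    · subst h; exact le_max_left _ _
    · exact le_trans (ih h) (le_max_right _ _)

lemma np_le (p : ℕ) : np PL p ≤ nI PL := by
  by_cases hp : p < PL.length
  · exact le_foldr_max (List.mem_map.2 ⟨prog PL p, prog_mem PL hp, rfl⟩)
  · rw [np, prog_default PL hp]; simp

lemma wlen_le (p i : ℕ) : (word PL p i).length ≤ nW PL := by
  by_cases hi : i < np PL p
  · have hp : p < PL.length := p_lt_of_np_pos PL (lt_of_le_of_lt (Nat.zero_le i) hi)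
    refine le_foldr_max (List.mem_map.2 ⟨item PL p i, ?_, rfl⟩)
    exact List.mem_flatten.2 ⟨prog PL p, prog_mem PL hp, item_mem PL hi⟩
  · rw [word, item_default PL hi]; simp

def nSt : ℕ := 1 + PL.length * (nI PL + 1) * (nW PL + 1)

def code : Option (ℕ × ℕ × ℕ) → ℕ
  | none => 0
  | some (p, i, j) => 1 + p + PL.length * (i + (nI PL + 1) * j)

def Valid : Option (ℕ × ℕ × ℕ) → Prop
  | none => True
  | some (p, i, j) => p < PL.length ∧ i ≤ np PL p ∧ j ≤ (word PL p i).length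

lemma mixed_radix {B x x' y y' : ℕ} (hx : x < B) (hx' : x' < B)
    (h : x + B * y = x' + B * y') : x = x' ∧ y = y' := by
  have hB : 0 < B := lt_of_le_of_lt (Nat.zero_le x) hx
  constructor
  · have := congrArg (· % B) h
    simpa [Nat.add_mul_mod_self_left, Nat.mod_eq_of_lt hx, Nat.mod_eq_of_lt hx'] using this
  · have := congrArg (· / B) h
    simpa [Nat.add_mul_div_left _ _ hB, Nat.div_eq_of_lt hx, Nat.div_eq_of_lt hx'] using this

lemma code_lt {s : Option (ℕ × ℕ × ℕ)} (hs : Valid PL s) : code PL s < nSt PL := by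
  match s with
  | none => simp [code, nSt]
  | some (p, i, j) =>
    obtain ⟨hp, hi, hj⟩ := hs
    have hi' : i ≤ nI PL := le_trans hi (np_le PL p)
    have hj' : j ≤ nW PL := le_trans hj (wlen_le PL p i)
    have h1 : i + (nI PL + 1) * j + 1 ≤ (nI PL + 1) * (nW PL + 1) := by
      calc i + (nI PL + 1) * j + 1 ≤ nI PL + (nI PL + 1) * nW PL + 1 := by
            have := Nat.mul_le_mul_left (nI PL + 1) hj'
            omega
        _ = (nI PL + 1) * (nW PL + 1) := by ring
    simp only [code, nSt]
    have h2 : PL.length * ((i + (nI PL + 1) * j) + 1) ≤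
        PL.length * ((nI PL + 1) * (nW PL + 1)) := Nat.mul_le_mul_left _ h1
    have h3 : PL.length * ((i + (nI PL + 1) * j) + 1)
        = PL.length * (i + (nI PL + 1) * j) + PL.length := by ring
    have h4 : PL.length * ((nI PL + 1) * (nW PL + 1))
        = PL.length * (nI PL + 1) * (nW PL + 1) := by ring
    omega

lemma code_inj {s s' : Option (ℕ × ℕ × ℕ)} (hs : Valid PL s) (hs' : Valid PL s')
    (h : code PL s = code PL s') : s = s' := by
  match s, s' with
  | none, none => rfl
  | none, some (p, i, j) =>
    exfalso; simp only [code] at h; omega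
  | some (p, i, j), none =>
    exfalso; simp only [code] at h; omega
  | some (p, i, j), some (p', i', j') =>
    obtain ⟨hp, hi, hj⟩ := hs
    obtain ⟨hp', hi', hj'⟩ := hs'
    simp only [code] at h
    have h' : p + PL.length * (i + (nI PL + 1) * j)
        = p' + PL.length * (i' + (nI PL + 1) * j') := by omega
    obtain ⟨hpp, hrest⟩ := mixed_radix hp hp' h'
    have hii : i < nI PL + 1 := by have := np_le PL p; omega
    have hii' : i' < nI PL + 1 := by have := np_le PL p'; omega
    obtain ⟨hi2, hj2⟩ := mixed_radix hii hii' hrest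
    simp [hpp, hi2, hj2]

/-- The abstract transition relation of a program machine. -/
inductive ATrans : Option (ℕ × ℕ × ℕ) → Option A → (Fin k → ℤ) → (Fin k → Bool) →
    Option (ℕ × ℕ × ℕ) → Prop
  | init (p : ℕ) (hp : p < PL.length) :
      ATrans none none (fun _ => 0) (fun _ => false) (some (p, 0, 0))
  | act (p i j : ℕ) (hi : i < np PL p) (hj : j < (word PL p i).length) (test : Fin k → Bool) :
      ATrans (some (p, i, j)) (((word PL p i).get ⟨j, hj⟩).aOpt)
        (((word PL p i).get ⟨j, hj⟩).aDelta) test (some (p, i, j + 1))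
  | adv (p i : ℕ) (hi : i < np PL p) (test : Fin k → Bool)
      (htest : i + 1 = np PL p → test = fun _ => false) :
      ATrans (some (p, i, (word PL p i).length)) none (fun _ => 0) test (some (p, i + 1, 0))
  | loop (p i : ℕ) (hi : i < np PL p) (hstar : star PL p i = true) (test : Fin k → Bool) :
      ATrans (some (p, i, (word PL p i).length)) none (fun _ => 0) test (some (p, i, 0))
  | skip (p i : ℕ) (hi : i < np PL p) (hstar : star PL p i = true) (test : Fin k → Bool)
      (htest : i + 1 = np PL p → test = fun _ => false) :
      ATrans (some (p, i, 0)) none (fun _ => 0) test (some (p, i + 1, 0))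

/-- The counter machine built from a list of programs. -/
def mkM : NCMachine k A where
  n := nSt PL
  start := ⟨0, by unfold nSt; omega⟩
  final := {q | ∃ p, p < PL.length ∧ q.val = code PL (some (p, np PL p, 0))}
  trans := {t | ∃ s s', ATrans PL s t.input t.delta t.test s' ∧ Valid PL s ∧ Valid PL s' ∧
      t.src.val = code PL s ∧ t.dst.val = code PL s'}


/-! #### Trace languages and soundness -/

@[simp] lemma hDelta_nil {n : ℕ} : hDelta ([] : List (CTrans k n A)) = [] := rfl

@[simp] lemma hDelta_cons {n : ℕ} (t : CTrans k n A) (ts : List (CTrans k n A)) :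
    hDelta (t :: ts) = t.instr ++ hDelta ts := by simp [hDelta]

lemma flatten_map_nil {X σ : Type} (l : List σ) (f : σ → List X) (hl : ∀ x ∈ l, f x = []) :
    (l.map f).flatten = [] := by
  induction l with
  | nil => rfl
  | cons b l' ih' =>
    simp only [List.map_cons, List.flatten_cons, hl b (List.mem_cons_self), List.nil_append]
    exact ih' (fun x hx => hl x (List.mem_cons_of_mem _ hx))

lemma flatten_map_single {X σ : Type} (l : List σ) (hnd : l.Nodup) (t : σ)
    (ht : t ∈ l) (f : σ → List X) (h' : ∀ i ∈ l, i ≠ t → f i = []) :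
    (l.map f).flatten = f t := by
  induction l with
  | nil => cases ht
  | cons a l ih =>
    rcases List.mem_cons.1 ht with h | h
    · subst h
      have hl : ∀ x ∈ l, f x = [] := fun x hx =>
        h' x (List.mem_cons_of_mem _ hx) (fun he => (List.nodup_cons.1 hnd).1 (he ▸ hx))
      have : (l.map f).flatten = [] := flatten_map_nil l f hl
      simp [this]
    · have hat : a ≠ t := fun he => (List.nodup_cons.1 hnd).1 (he ▸ h)
      have ha : f a = [] := h' a (List.mem_cons_self) hat
      simp only [List.map_cons, List.flatten_cons, ha, List.nil_append]
      exact ih (List.nodup_cons.1 hnd).2 h (fun i hi hit => h' i (List.mem_cons_of_mem _ hi) hit)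

lemma instr_of_delta_zero {n : ℕ} (t : CTrans k n A) (hd : t.delta = fun _ => 0) :
    t.instr = [] := by
  unfold CTrans.instr
  rw [hd]
  have : ((List.finRange k).map fun i =>
      (if (0:ℤ) = 1 then [Instr.C i] else if (0:ℤ) = -1 then [Instr.D i] else []))
      = (List.finRange k).map fun _ => ([] : List (Instr k)) := by
    apply List.map_congr_left; intro i _; norm_num
  simp only [this]
  induction List.finRange k with
  | nil => rfl
  | cons a l ih => simpa using ih

lemma instr_of_delta_act {n : ℕ} (t : CTrans k n A) (a : Act k A) (hd : t.delta = a.aDelta) :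
    t.instr = a.aInstr := by
  cases a with
  | read x =>
    rw [instr_of_delta_zero t (by rw [hd]; rfl)]; rfl
  | inc s =>
    unfold CTrans.instr
    rw [hd]
    rw [flatten_map_single (List.finRange k) (List.nodup_finRange k) s (List.mem_finRange s)]
    · simp [Act.aDelta, Act.aInstr]
    · intro i _ his
      simp [Act.aDelta, his]
  | dec s =>
    unfold CTrans.instr
    rw [hd]
    rw [flatten_map_single (List.finRange k) (List.nodup_finRange k) s (List.mem_finRange s)]
    · simp [Act.aDelta, Act.aInstr]
    · intro i _ his
      simp [Act.aDelta, his]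

def itemLang (it : PItem k A) : Language (Act k A) :=
  (if it.2 = true then {w | ∃ c, w = (List.replicate c it.1).flatten} else {it.1} : Set (List (Act k A)))

def listLang : Prog k A → Language (Act k A)
  | [] => {[]}
  | it :: r => itemLang it * listLang r

lemma listLang_nil : listLang ([] : Prog k A) = 1 := rfl

lemma listLang_cons (it : PItem k A) (r : Prog k A) :
    listLang (it :: r) = itemLang it * listLang r := rfl

lemma listLang_append (xs ys : Prog k A) :
    listLang (xs ++ ys) = listLang xs * listLang ys := by
  induction xs with
  | nil => simp [listLang_nil]
  | cons it xs ih => simp [listLang_cons, ih, mul_assoc]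

lemma mem_listLang_snoc {xs : Prog k A} {it : PItem k A} {β γ : List (Act k A)}
    (hβ : β ∈ listLang xs) (hγ : γ ∈ itemLang it) : β ++ γ ∈ listLang (xs ++ [it]) := by
  rw [listLang_append]
  exact Language.mem_mul.2 ⟨β, hβ, γ, by simpa [listLang_cons, listLang_nil] using hγ, rfl⟩

lemma gamma_word_mem {it : PItem k A} {γ : List (Act k A)}
    (hγ : if it.2 = true then ∃ c, γ = (List.replicate c it.1).flatten else γ = []) :
    γ ++ it.1 ∈ itemLang it := by
  by_cases hst : it.2 = true
  · rw [if_pos hst] at hγ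
    obtain ⟨c, rfl⟩ := hγ
    rw [itemLang, if_pos hst]
    exact ⟨c + 1, by rw [List.replicate_succ', List.flatten_append]; simp⟩
  · rw [if_neg hst] at hγ
    subst hγ
    rw [itemLang, if_neg hst]
    exact rfl

def SOK (s : Option (ℕ × ℕ × ℕ)) (α : List (Act k A)) : Prop :=
  match s with
  | none => α = []
  | some (p, i, j) => ∃ β γ, β ∈ listLang ((prog PL p).take i) ∧
      (if star PL p i = true then ∃ c, γ = (List.replicate c (word PL p i)).flatten
        else γ = []) ∧
      α = β ++ γ ++ (word PL p i).take j

def IsFinalA (s : Option (ℕ × ℕ × ℕ)) : Prop :=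
  ∃ p, p < PL.length ∧ s = some (p, np PL p, 0)

lemma word_final (p : ℕ) : word PL p (np PL p) = [] := by
  rw [word, item_default PL (by omega)]

lemma star_final (p : ℕ) : star PL p (np PL p) = false := by
  rw [star, item_default PL (by omega)]

lemma take_item {p i : ℕ} (hi : i < np PL p) :
    (prog PL p).take (i + 1) = (prog PL p).take i ++ [item PL p i] := by
  rw [item_eq PL hi]
  rw [List.take_succ, List.getElem?_eq_getElem hi]
  rfl

lemma sok_final {p : ℕ} (hp : p < PL.length) {α : List (Act k A)} :
    SOK PL (some (p, np PL p, 0)) α ↔ α ∈ listLang (prog PL p) := by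
  constructor
  · rintro ⟨β, γ, hβ, hγ, rfl⟩
    rw [star_final] at hγ
    simp only [Bool.false_eq_true, if_false] at hγ
    subst hγ
    rw [show (prog PL p).take (np PL p) = prog PL p from List.take_length] at hβ
    simpa using hβ
  · intro hα
    refine ⟨α, [], by rwa [show (prog PL p).take (np PL p) = prog PL p from List.take_length], ?_, by simp⟩
    rw [star_final]
    simp

lemma sok_zero_pos {p i : ℕ} {α : List (Act k A)}
    (h : ∃ β γ, β ∈ listLang ((prog PL p).take i) ∧
      (if star PL p i = true then ∃ c, γ = (List.replicate c (word PL p i)).flatten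
        else γ = []) ∧ α = β ++ γ) :
    SOK PL (some (p, i, 0)) α := by
  obtain ⟨β, γ, hβ, hγ, rfl⟩ := h
  exact ⟨β, γ, hβ, hγ, by simp⟩

lemma sok_advance {p i : ℕ} (hi : i < np PL p) {α : List (Act k A)}
    (h : α ∈ listLang ((prog PL p).take (i + 1))) :
    SOK PL (some (p, i + 1, 0)) α := by
  apply sok_zero_pos
  refine ⟨α, [], h, ?_, by simp⟩
  by_cases hst : star PL p (i+1) = true
  · rw [if_pos hst]; exact ⟨0, rfl⟩
  · rw [if_neg hst]

lemma no_atrans_final {s : Option (ℕ × ℕ × ℕ)} {inp : Option A} {δ : Fin k → ℤ}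
    {test : Fin k → Bool} {s' : Option (ℕ × ℕ × ℕ)}
    (h : ATrans PL s inp δ test s') (hf : IsFinalA PL s) : False := by
  obtain ⟨p, hp, hs⟩ := hf
  cases h with
  | init p' hp' => simp at hs
  | act p' i j hi hj t =>
    obtain ⟨rfl, h2, h3⟩ : p = p' ∧ np PL p = i ∧ 0 = j := by simpa using hs.symm
    omega
  | adv p' i hi t ht =>
    obtain ⟨rfl, h2, h3⟩ : p = p' ∧ np PL p = i ∧ 0 = (word PL p' i).length := by
      simpa using hs.symm
    omega
  | loop p' i hi hst t =>
    obtain ⟨rfl, h2, h3⟩ : p = p' ∧ np PL p = i ∧ 0 = (word PL p' i).length := by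
      simpa using hs.symm
    omega
  | skip p' i hi hst t ht =>
    obtain ⟨rfl, h2⟩ : p = p' ∧ np PL p = i := by simpa using hs.symm
    omega

lemma counters_zero_of_allfalse {cnt cnt' : Fin k → ℕ} {tst : Fin k → Bool} {δ : Fin k → ℤ}
    (htest : ∀ i, tst i = true ↔ 0 < cnt i) (htt : tst = fun _ => false)
    (hcnt : ∀ i, ((cnt' i : ℕ) : ℤ) = (cnt i : ℤ) + δ i) (hdz : δ = fun _ => 0) :
    cnt' = fun _ => 0 := by
  funext i
  have h1 : ¬ 0 < cnt i := by rw [← htest i, htt]; simp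
  have h2 := hcnt i
  rw [hdz] at h2
  simp only at h2
  omega

lemma input_match {a : Act k A} {u v : List A}
    (h : match a.aOpt with | none => v = u | some x => u = x :: v) :
    u = a.aInput ++ v := by
  cases a with
  | read x => exact h
  | inc s => exact h.symm
  | dec s => exact h.symm

lemma isfinal_elim {p i j : ℕ} (h : IsFinalA PL (some (p, i, j))) : i = np PL p ∧ j = 0 := by
  obtain ⟨p', hp', heq⟩ := h
  obtain ⟨rfl, h2, h3⟩ : p = p' ∧ i = np PL p' ∧ j = 0 := by simpa using heq
  exact ⟨h2, h3⟩

lemma sok_start {p : ℕ} : SOK PL (some (p, 0, 0)) [] := by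
  apply sok_zero_pos
  refine ⟨[], [], rfl, ?_, by simp⟩
  by_cases hst : star PL p 0 = true
  · rw [if_pos hst]; exact ⟨0, rfl⟩
  · rw [if_neg hst]

lemma step_sound {t : CTrans k (nSt PL) A} {c c' : (mkM PL).Config}
    (h : (mkM PL).Step t c c') {s : Option (ℕ × ℕ × ℕ)} (hv : Valid PL s)
    (hc : (c.1 : Fin (nSt PL)).val = code PL s) {α : List (Act k A)} (hα : SOK PL s α) :
    ∃ s' acts, Valid PL s' ∧ (c'.1 : Fin (nSt PL)).val = code PL s' ∧
      SOK PL s' (α ++ acts) ∧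
      c.2.1 = inWord acts ++ c'.2.1 ∧ (∀ i, ((c'.2.2 i : ℕ) : ℤ) = (c.2.2 i : ℤ) + dsum acts i) ∧
      t.instr = instrWord acts ∧ (IsFinalA PL s' → c'.2.2 = fun _ => 0) := by
  obtain ⟨htr, hsrc, hdst, htest, hrange, hcnt, hinp⟩ := h
  obtain ⟨s₀, s₁, hAT, hv₀, hv₁, hcs, hcd⟩ := htr
  have hss : s = s₀ := code_inj PL hv hv₀ (by rw [← hc, hsrc, hcs])
  subst hss
  rw [hsrc] at hc
  rw [hdst] at *
  generalize hti : t.input = inp at hAT hinp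
  generalize htd : t.delta = δ at hAT hcnt
  generalize hts : t.test = tst at hAT htest
  cases hAT with
  | init p hp =>
    have hα' : α = [] := hα
    subst hα'
    refine ⟨some (p, 0, 0), [], hv₁, hcd, by simpa using sok_start PL, ?_, ?_, ?_, ?_⟩
    · simpa using hinp.symm
    · intro i; simpa using hcnt i
    · exact instr_of_delta_zero t htd
    · intro hfin
      exact counters_zero_of_allfalse htest rfl hcnt rfl
  | act p i j hi hj test =>
    obtain ⟨β, γ, hβ, hγ, rfl⟩ := hα
    refine ⟨some (p, i, j + 1), [(word PL p i).get ⟨j, hj⟩], hv₁, hcd, ?_, ?_, ?_, ?_, ?_⟩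
    · refine ⟨β, γ, hβ, hγ, ?_⟩
      have : (word PL p i).take (j + 1) =
          (word PL p i).take j ++ [(word PL p i).get ⟨j, hj⟩] := by
        rw [List.take_succ, List.getElem?_eq_getElem hj]
        rfl
      rw [this]
      simp
    · have := input_match (a := (word PL p i).get ⟨j, hj⟩) hinp
      simpa [inWord] using this
    · intro i'
      simpa [dsum] using hcnt i'
    · have := instr_of_delta_act t _ htd
      simpa [instrWord] using this
    · intro hfin
      exfalso
      obtain ⟨h1, h2⟩ := isfinal_elim PL hfin
      omega
  | adv p i hi test htest' =>
    obtain ⟨β, γ, hβ, hγ, rfl⟩ := hα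
    rw [show (word PL p i).take (word PL p i).length = word PL p i from List.take_length] at *
    refine ⟨some (p, i + 1, 0), [], hv₁, hcd, ?_, ?_, ?_, ?_, ?_⟩
    · rw [List.append_nil]
      apply sok_advance PL hi
      rw [take_item PL hi]
      have := mem_listLang_snoc hβ (gamma_word_mem (it := item PL p i) hγ)
      simpa [List.append_assoc, word] using this
    · simpa using hinp.symm
    · intro i'; simpa using hcnt i'
    · exact instr_of_delta_zero t htd
    · intro hfin
      obtain ⟨h1, h2⟩ := isfinal_elim PL hfin
      exact counters_zero_of_allfalse htest (htest' h1) hcnt rfl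
  | loop p i hi hst test =>
    obtain ⟨β, γ, hβ, hγ, rfl⟩ := hα
    rw [show (word PL p i).take (word PL p i).length = word PL p i from List.take_length] at *
    refine ⟨some (p, i, 0), [], hv₁, hcd, ?_, ?_, ?_, ?_, ?_⟩
    · rw [List.append_nil]
      apply sok_zero_pos
      rw [if_pos hst] at hγ
      obtain ⟨cc, rfl⟩ := hγ
      refine ⟨β, (List.replicate (cc + 1) (word PL p i)).flatten, hβ, ?_, ?_⟩
      · rw [if_pos hst]; exact ⟨cc + 1, rfl⟩
      · rw [List.replicate_succ', List.flatten_append]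
        simp
    · simpa using hinp.symm
    · intro i'; simpa using hcnt i'
    · exact instr_of_delta_zero t htd
    · intro hfin
      exfalso
      obtain ⟨h1, h2⟩ := isfinal_elim PL hfin
      omega
  | skip p i hi hst test htest' =>
    obtain ⟨β, γ, hβ, hγ, rfl⟩ := hα
    simp only [List.take_zero, List.append_nil] at *
    refine ⟨some (p, i + 1, 0), [], hv₁, hcd, ?_, ?_, ?_, ?_, ?_⟩
    · rw [List.append_nil]
      apply sok_advance PL hi
      rw [take_item PL hi]
      refine mem_listLang_snoc hβ ?_
      rw [itemLang, if_pos (show (item PL p i).2 = true from hst)]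
      rw [if_pos hst] at hγ
      exact hγ
    · simpa using hinp.symm
    · intro i'; simpa using hcnt i'
    · exact instr_of_delta_zero t htd
    · intro hfin
      obtain ⟨h1, h2⟩ := isfinal_elim PL hfin
      exact counters_zero_of_allfalse htest (htest' h1) hcnt rfl

lemma step_not_from_final {t : CTrans k (nSt PL) A} {c c' : (mkM PL).Config}
    (h : (mkM PL).Step t c c') {s : Option (ℕ × ℕ × ℕ)} (hv : Valid PL s)
    (hc : (c.1 : Fin (nSt PL)).val = code PL s) (hf : IsFinalA PL s) : False := by
  obtain ⟨htr, hsrc, -, -, -, -, -⟩ := h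
  obtain ⟨s₀, s₁, hAT, hv₀, -, hcs, -⟩ := htr
  have hss : s = s₀ := code_inj PL hv hv₀ (by rw [← hc, hsrc, hcs])
  exact no_atrans_final PL hAT (hss ▸ hf)

lemma derives_sound {ts : List (CTrans k (nSt PL) A)} {c c' : (mkM PL).Config}
    (h : (mkM PL).Derives ts c c') {s : Option (ℕ × ℕ × ℕ)} (hv : Valid PL s)
    (hc : (c.1 : Fin (nSt PL)).val = code PL s) {α : List (Act k A)} (hα : SOK PL s α) :
    ∃ s' β, Valid PL s' ∧ (c'.1 : Fin (nSt PL)).val = code PL s' ∧ SOK PL s' (α ++ β) ∧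
      c.2.1 = inWord β ++ c'.2.1 ∧ (∀ i, ((c'.2.2 i : ℕ) : ℤ) = (c.2.2 i : ℤ) + dsum β i) ∧
      hDelta ts = instrWord β ∧
      (IsFinalA PL s' → (s = s' ∨ c'.2.2 = fun _ => 0)) := by
  induction ts generalizing c s α with
  | nil =>
    have h' : c' = c := h
    subst h'
    exact ⟨s, [], hv, hc, by simpa using hα, by simp, by simp, by simp, fun _ => Or.inl rfl⟩
  | cons t ts ih =>
    obtain ⟨c₁, hst, hrest⟩ := h
    obtain ⟨s₁, acts, hv₁, hc₁, hsok1, hin1, hcnt1, hinstr1, hfz1⟩ := step_sound PL hst hv hc hα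
    obtain ⟨s', β', hv', hc', hsok', hin', hcnt', hinstr', hfz'⟩ := ih hrest hv₁ hc₁ hsok1
    refine ⟨s', acts ++ β', hv', hc', by rwa [← List.append_assoc], ?_, ?_, ?_, ?_⟩
    · rw [hin1, hin', inWord_append, List.append_assoc]
    · intro i; rw [hcnt' i, hcnt1 i, dsum_append]; ring
    · rw [hDelta_cons, hinstr1, hinstr', instrWord_append]
    · intro hfin
      rcases hfz' hfin with heq | hz
      · right
        subst heq
        cases ts with
        | nil =>
          have h' : c' = c₁ := hrest
          subst h'
          exact hfz1 hfin
        | cons t' ts' =>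
          obtain ⟨c₂, hst2, -⟩ := hrest
          exact (step_not_from_final PL hst2 hv₁ hc₁ hfin).elim
      · exact Or.inr hz

lemma accept_sound {w : List A} {ts : List (CTrans k (nSt PL) A)} {q : Fin (nSt PL)}
    {cnt : Fin k → ℕ} (hq : q ∈ (mkM PL).final)
    (hd : (mkM PL).Derives ts ((mkM PL).initConfig w) (q, [], cnt)) :
    cnt = (fun _ => 0) ∧ ∃ p, p < PL.length ∧ ∃ α, α ∈ listLang (prog PL p) ∧
      hDelta ts = instrWord α ∧ w = inWord α ∧ (∀ t, dsum α t = 0) := by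
  have hv0 : Valid PL none := trivial
  have hc0 : (((mkM PL).initConfig w).1 : Fin (nSt PL)).val = code PL none := rfl
  have hα0 : SOK PL none ([] : List (Act k A)) := rfl
  obtain ⟨s', β, hv', hc', hsok', hin', hcnt', hinstr', hfz'⟩ :=
    derives_sound PL hd hv0 hc0 hα0
  obtain ⟨p, hp, hqv⟩ := hq
  have hvf : Valid PL (some (p, np PL p, 0)) := ⟨hp, le_refl _, by simp [word_final]⟩
  have hs' : s' = some (p, np PL p, 0) := code_inj PL hv' hvf (by rw [← hc']; exact hqv)
  subst hs'
  have hfin : IsFinalA PL (some (p, np PL p, 0)) := ⟨p, hp, rfl⟩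
  have hz : cnt = fun _ => 0 := by
    rcases hfz' hfin with heq | hz
    · exact absurd heq (by simp)
    · exact hz
  refine ⟨hz, p, hp, β, (sok_final PL hp).1 (by simpa using hsok'), hinstr', by simpa [NCMachine.initConfig] using hin', ?_⟩
  intro t
  have := hcnt' t
  rw [hz] at this
  simp only [NCMachine.initConfig] at this
  simpa using this.symm

/-! #### Well-formedness -/

lemma aDelta_support (a : Act k A) {i j : Fin k} (hi : a.aDelta i ≠ 0) (hj : a.aDelta j ≠ 0) :
    i = j := by
  cases a with
  | read x => simp [Act.aDelta] at hi
  | inc t0 =>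
    by_cases h1 : i = t0
    · by_cases h2 : j = t0
      · rw [h1, h2]
      · simp [Act.aDelta, h2] at hj
    · simp [Act.aDelta, h1] at hi
  | dec t0 =>
    by_cases h1 : i = t0
    · by_cases h2 : j = t0
      · rw [h1, h2]
      · simp [Act.aDelta, h2] at hj
    · simp [Act.aDelta, h1] at hi

lemma mem_of_mem_listLang {pr : Prog k A} {α : List (Act k A)} (h : α ∈ listLang pr)
    {a : Act k A} (ha : a ∈ α) : ∃ it ∈ pr, a ∈ it.1 := by
  induction pr generalizing α with
  | nil =>
    have h' : α = [] := h
    subst h'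
    cases ha
  | cons it pr ih =>
    obtain ⟨γ, hγ, rest, hrest, rfl⟩ := Language.mem_mul.1 h
    rcases List.mem_append.1 ha with h1 | h2
    · refine ⟨it, List.mem_cons_self, ?_⟩
      unfold itemLang at hγ
      split at hγ
      · obtain ⟨c, rfl⟩ := hγ
        obtain ⟨l, hl, hal⟩ := List.mem_flatten.1 h1
        rwa [List.eq_of_mem_replicate hl] at hal
      · change γ = _ at hγ; subst hγ; exact h1
    · obtain ⟨it', h', ha'⟩ := ih hrest h2
      exact ⟨it', List.mem_cons_of_mem _ h', ha'⟩

lemma mem_of_mem_instrWord {α : List (Act k A)} {x : Instr k} (h : x ∈ instrWord α) :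
    ∃ a ∈ α, x ∈ a.aInstr := by
  obtain ⟨l, hl, hxl⟩ := List.mem_flatten.1 h
  obtain ⟨a, ha, rfl⟩ := List.mem_map.1 hl
  exact ⟨a, ha, hxl⟩

lemma incBeforeDec_of_split {u v : List (Instr k)} (hu : ∀ x ∈ u, x.isInc)
    (hv : ∀ x ∈ v, x.isDec) : IncBeforeDec (u ++ v) := by
  intro i x y z heq
  by_cases hlen : x.length < u.length
  · have hD : Instr.D i ∈ u := by
      have h1 : u = (u ++ v).take u.length := (List.take_left (l₁ := u) (l₂ := v)).symm
      rw [heq] at h1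
      have h2 : (x ++ Instr.D i :: (y ++ Instr.C i :: z)).take u.length
          = x ++ (Instr.D i :: (y ++ Instr.C i :: z)).take (u.length - x.length) := by
        rw [List.take_append, List.take_of_length_le (le_of_lt hlen)]
      have h3 : 0 < u.length - x.length := by omega
      rw [h2] at h1
      have : Instr.D i ∈ (Instr.D i :: (y ++ Instr.C i :: z)).take (u.length - x.length) := by
        cases hn : u.length - x.length with
        | zero => omega
        | succ n => rw [List.take_succ_cons]; exact List.mem_cons_self
      rw [h1]
      exact List.mem_append.2 (Or.inr this)
    exact hu _ hD
  · have hC : Instr.C i ∈ v := by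
      have h1 : v = (u ++ v).drop u.length := (List.drop_left (l₁ := u) (l₂ := v)).symm
      rw [heq] at h1
      have h2 : (x ++ Instr.D i :: (y ++ Instr.C i :: z)).drop u.length
          = x.drop u.length ++ Instr.D i :: (y ++ Instr.C i :: z) := by
        rw [List.drop_append_of_le_length (by omega)]
      rw [h2] at h1
      rw [h1]
      refine List.mem_append.2 (Or.inr ?_)
      exact List.mem_cons_of_mem _ (List.mem_append.2 (Or.inr (List.mem_cons_self)))
    exact hv _ hC

lemma mkM_wellformed
    (Hsplit : ∀ p, p < PL.length → ∃ pr1 pr2, prog PL p = pr1 ++ pr2 ∧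
      (∀ it ∈ pr1, ∀ a ∈ it.1, ∀ x ∈ a.aInstr, x.isInc) ∧
      (∀ it ∈ pr2, ∀ a ∈ it.1, ∀ x ∈ a.aInstr, x.isDec)) :
    (mkM PL).WellFormed := by
  constructor
  · rintro t ⟨s₀, s₁, hAT, -, -, -, -⟩ i j hi hj
    generalize hti : t.input = inp at hAT
    generalize htd : t.delta = δ at hAT hi hj
    generalize hts : t.test = tst at hAT
    cases hAT with
    | init p hp => simp at hi
    | act p i' j' hi' hj' test => exact aDelta_support _ hi hj
    | adv p i' hi' test htest' => simp at hi
    | loop p i' hi' hst test => simp at hi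
    | skip p i' hi' hst test htest' => simp at hi
  · intro w ts q cnt hq hd
    obtain ⟨hz, p, hp, α, hα, hinstr, hw, hds⟩ := accept_sound PL hq hd
    refine ⟨hz, ?_⟩
    erw [hinstr]
    obtain ⟨pr1, pr2, hpr, h1, h2⟩ := Hsplit p hp
    rw [hpr, listLang_append] at hα
    obtain ⟨α1, h1', α2, h2', rfl⟩ := Language.mem_mul.1 hα
    rw [instrWord_append]
    apply incBeforeDec_of_split
    · intro x hx
      obtain ⟨a, ha, hxa⟩ := mem_of_mem_instrWord hx
      obtain ⟨it, hit, hait⟩ := mem_of_mem_listLang h1' ha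
      exact h1 it hit a hait x hxa
    · intro x hx
      obtain ⟨a, ha, hxa⟩ := mem_of_mem_instrWord hx
      obtain ⟨it, hit, hait⟩ := mem_of_mem_listLang h2' ha
      exact h2 it hit a hait x hxa

/-! #### Completeness: constructing accepting runs -/

lemma derives_append {ts1 ts2 : List (CTrans k (nSt PL) A)} {c c' c'' : (mkM PL).Config}
    (h1 : (mkM PL).Derives ts1 c c') (h2 : (mkM PL).Derives ts2 c' c'') :
    (mkM PL).Derives (ts1 ++ ts2) c c'' := by
  induction ts1 generalizing c with
  | nil => have h' : c' = c := h1; subst h'; exact h2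
  | cons t ts ih =>
    obtain ⟨c₁, hst, hrest⟩ := h1
    exact ⟨c₁, hst, ih hrest⟩

def Reaches (c c' : (mkM PL).Config) : Prop := ∃ ts, (mkM PL).Derives ts c c'

lemma reaches_refl (c : (mkM PL).Config) : Reaches PL c c := ⟨[], rfl⟩

lemma reaches_trans {c c' c'' : (mkM PL).Config} (h1 : Reaches PL c c')
    (h2 : Reaches PL c' c'') : Reaches PL c c'' := by
  obtain ⟨ts1, h1⟩ := h1
  obtain ⟨ts2, h2⟩ := h2
  exact ⟨ts1 ++ ts2, derives_append PL h1 h2⟩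

def cfg (s : Option (ℕ × ℕ × ℕ)) (hv : Valid PL s) (r : List A) (cnt : Fin k → ℕ) :
    (mkM PL).Config := (⟨code PL s, code_lt PL hv⟩, r, cnt)

lemma aDelta_range (a : Act k A) (i : Fin k) :
    a.aDelta i = -1 ∨ a.aDelta i = 0 ∨ a.aDelta i = 1 := by
  cases a with
  | read x => right; left; rfl
  | inc t0 => by_cases h : i = t0 <;> simp [Act.aDelta, h]
  | dec t0 => by_cases h : i = t0 <;> simp [Act.aDelta, h]

lemma input_match' (a : Act k A) {u v : List A} (h : u = a.aInput ++ v) :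
    (a.aOpt).elim (v = u) (fun x => u = x :: v) := by
  cases a with
  | read x => exact h
  | inc s => exact h.symm
  | dec s => exact h.symm

lemma reach_step {s s' : Option (ℕ × ℕ × ℕ)} {inp : Option A} {δ : Fin k → ℤ}
    {tst : Fin k → Bool} (hAT : ATrans PL s inp δ tst s') (hv : Valid PL s) (hv' : Valid PL s')
    {r r' : List A} {cnt cnt' : Fin k → ℕ}
    (htest : ∀ i, tst i = true ↔ 0 < cnt i)
    (hrange : ∀ i, δ i = -1 ∨ δ i = 0 ∨ δ i = 1)
    (hcnt : ∀ i, ((cnt' i : ℕ) : ℤ) = (cnt i : ℤ) + δ i)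
    (hinp : inp.elim (r' = r) (fun a => r = a :: r')) :
    Reaches PL (cfg PL s hv r cnt) (cfg PL s' hv' r' cnt') := by
  refine ⟨[⟨⟨code PL s, code_lt PL hv⟩, inp, tst, ⟨code PL s', code_lt PL hv'⟩, δ⟩],
    (cfg PL s' hv' r' cnt'),
    ⟨⟨s, s', hAT, hv, hv', rfl, rfl⟩, rfl, rfl, htest, hrange, hcnt, ?_⟩, rfl⟩
  cases inp with
  | none => exact hinp
  | some a => exact hinp


lemma feas_append_left {α β : List (Act k A)} {cnt : Fin k → ℕ}
    (h : ∀ n t, 0 ≤ (cnt t : ℤ) + dsum ((α ++ β).take n) t) :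
    ∀ n t, 0 ≤ (cnt t : ℤ) + dsum (α.take n) t := by
  intro n t
  rcases le_or_gt n α.length with hn | hn
  · have := h n t
    rwa [List.take_append_of_le_length hn] at this
  · have := h α.length t
    rw [List.take_left] at this
    rwa [List.take_of_length_le (le_of_lt hn)]

lemma feas_append_right {α β : List (Act k A)} {cnt cnt₁ : Fin k → ℕ}
    (hcnt₁ : ∀ t, (cnt₁ t : ℤ) = (cnt t : ℤ) + dsum α t)
    (h : ∀ n t, 0 ≤ (cnt t : ℤ) + dsum ((α ++ β).take n) t) :
    ∀ n t, 0 ≤ (cnt₁ t : ℤ) + dsum (β.take n) t := by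
  intro n t
  have h2 := h (α.length + n) t
  rw [List.take_length_add_append, dsum_append] at h2
  rw [hcnt₁ t]
  linarith

lemma reach_word {p i : ℕ} (hi : i < np PL p) :
    ∀ (fuel j : ℕ), (word PL p i).length - j = fuel → ∀ (hj : j ≤ (word PL p i).length)
      (r rin : List A) (cnt cnt' : Fin k → ℕ),
      rin = inWord ((word PL p i).drop j) ++ r →
      (∀ n t, 0 ≤ (cnt t : ℤ) + dsum (((word PL p i).drop j).take n) t) →
      (∀ t, (cnt' t : ℤ) = (cnt t : ℤ) + dsum ((word PL p i).drop j) t) →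
    Reaches PL
      (cfg PL (some (p, i, j)) ⟨p_lt_of_np_pos PL (by omega), le_of_lt hi, hj⟩ rin cnt)
      (cfg PL (some (p, i, (word PL p i).length))
        ⟨p_lt_of_np_pos PL (by omega), le_of_lt hi, le_refl _⟩ r cnt') := by
  intro fuel
  induction fuel with
  | zero =>
    intro j hfj hj r rin cnt cnt' hrin hfeas hcnt'
    have hjl : j = (word PL p i).length := by omega
    subst hjl
    rw [List.drop_length] at hrin hcnt'
    have h1 : rin = r := by simpa using hrin
    have h2 : cnt' = cnt := by
      funext t
      have := hcnt' t
      simp only [dsum_nil, add_zero] at this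
      exact_mod_cast this
    subst h1; subst h2
    exact reaches_refl PL _
  | succ n ih =>
    intro j hfj hj r rin cnt cnt' hrin hfeas hcnt'
    have hjlt : j < (word PL p i).length := by omega
    have hdrop : (word PL p i).drop j
        = (word PL p i).get ⟨j, hjlt⟩ :: (word PL p i).drop (j + 1) :=
      List.drop_eq_getElem_cons hjlt
    set a := (word PL p i).get ⟨j, hjlt⟩ with ha
    have hnn : ∀ t, 0 ≤ (cnt t : ℤ) + a.aDelta t := by
      intro t
      have := hfeas 1 t
      rw [hdrop, List.take_succ_cons, List.take_zero, dsum_cons, dsum_nil, add_zero] at this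
      exact this
    set cnt₁ : Fin k → ℕ := fun t => ((cnt t : ℤ) + a.aDelta t).toNat with hcnt₁
    have h1 : ∀ t, ((cnt₁ t : ℕ) : ℤ) = (cnt t : ℤ) + a.aDelta t := by
      intro t
      rw [hcnt₁]
      exact Int.toNat_of_nonneg (hnn t)
    have hstep : Reaches PL
        (cfg PL (some (p, i, j)) ⟨p_lt_of_np_pos PL (by omega), le_of_lt hi, hj⟩ rin cnt)
        (cfg PL (some (p, i, j + 1)) ⟨p_lt_of_np_pos PL (by omega), le_of_lt hi, hjlt⟩
          (inWord ((word PL p i).drop (j + 1)) ++ r) cnt₁) := by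
      refine reach_step PL (ATrans.act p i j hi hjlt (fun t => decide (0 < cnt t))) _ _
        (by intro t; simp) (aDelta_range a) h1 ?_
      apply input_match'
      rw [hrin, hdrop, inWord_cons, List.append_assoc]
    refine reaches_trans PL hstep ?_
    refine ih (j + 1) (by omega) hjlt r _ cnt₁ cnt' rfl ?_ ?_
    · intro n' t
      have := hfeas (n' + 1) t
      rw [hdrop, List.take_succ_cons, dsum_cons] at this
      rw [h1 t]
      linarith
    · intro t
      have := hcnt' t
      rw [hdrop, dsum_cons] at this
      rw [h1 t]
      linarith

lemma reach_loops {p i : ℕ} (hi : i < np PL p) (hst : star PL p i = true) :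
    ∀ (c : ℕ) (r rin : List A) (cnt cnt' : Fin k → ℕ),
      rin = inWord ((List.replicate c (word PL p i)).flatten) ++ r →
      (∀ n t, 0 ≤ (cnt t : ℤ) + dsum (((List.replicate c (word PL p i)).flatten).take n) t) →
      (∀ t, (cnt' t : ℤ) = (cnt t : ℤ) + dsum ((List.replicate c (word PL p i)).flatten) t) →
    Reaches PL
      (cfg PL (some (p, i, 0)) ⟨p_lt_of_np_pos PL (by omega), le_of_lt hi, Nat.zero_le _⟩ rin cnt)
      (cfg PL (some (p, i, 0)) ⟨p_lt_of_np_pos PL (by omega), le_of_lt hi, Nat.zero_le _⟩ r cnt') := by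
  intro c
  induction c with
  | zero =>
    intro r rin cnt cnt' hrin hfeas hcnt'
    simp only [List.replicate, List.flatten_nil, inWord_nil, List.nil_append, dsum_nil,
      add_zero] at hrin hcnt'
    have h2 : cnt' = cnt := by funext t; exact_mod_cast hcnt' t
    subst hrin; subst h2
    exact reaches_refl PL _
  | succ c ih =>
    intro r rin cnt cnt' hrin hfeas hcnt'
    have hflat : (List.replicate (c + 1) (word PL p i)).flatten
        = word PL p i ++ (List.replicate c (word PL p i)).flatten := by
      rw [List.replicate_succ, List.flatten_cons]
    rw [hflat] at hrin hfeas hcnt'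
    have hnn : ∀ t, 0 ≤ (cnt t : ℤ) + dsum (word PL p i) t := by
      intro t
      have := feas_append_left hfeas (word PL p i).length t
      rwa [List.take_length] at this
    set cnt₁ : Fin k → ℕ := fun t => ((cnt t : ℤ) + dsum (word PL p i) t).toNat with hcnt₁
    have h1 : ∀ t, ((cnt₁ t : ℕ) : ℤ) = (cnt t : ℤ) + dsum (word PL p i) t := by
      intro t; rw [hcnt₁]; exact Int.toNat_of_nonneg (hnn t)
    have hw : Reaches PL
        (cfg PL (some (p, i, 0)) ⟨p_lt_of_np_pos PL (by omega), le_of_lt hi, Nat.zero_le _⟩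
          rin cnt)
        (cfg PL (some (p, i, (word PL p i).length))
          ⟨p_lt_of_np_pos PL (by omega), le_of_lt hi, le_refl _⟩
          (inWord ((List.replicate c (word PL p i)).flatten) ++ r) cnt₁) := by
      refine reach_word PL hi _ 0 rfl (Nat.zero_le _) _ _ cnt cnt₁ ?_ ?_ ?_
      · rw [List.drop_zero, hrin, inWord_append, List.append_assoc]
      · rw [List.drop_zero]; exact feas_append_left hfeas
      · rw [List.drop_zero]; exact h1
    have hloop : Reaches PL
        (cfg PL (some (p, i, (word PL p i).length))
          ⟨p_lt_of_np_pos PL (by omega), le_of_lt hi, le_refl _⟩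
          (inWord ((List.replicate c (word PL p i)).flatten) ++ r) cnt₁)
        (cfg PL (some (p, i, 0)) ⟨p_lt_of_np_pos PL (by omega), le_of_lt hi, Nat.zero_le _⟩
          (inWord ((List.replicate c (word PL p i)).flatten) ++ r) cnt₁) := by
      refine reach_step PL (ATrans.loop p i hi hst (fun t => decide (0 < cnt₁ t))) _ _
        (by intro t; simp) (fun t => Or.inr (Or.inl rfl)) (by intro t; simp) rfl
    refine reaches_trans PL hw (reaches_trans PL hloop ?_)
    refine ih r _ cnt₁ cnt' rfl (feas_append_right h1 hfeas) ?_
    intro t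
    rw [h1 t]
    have := hcnt' t
    rw [dsum_append] at this
    linarith

lemma reach_items {p : ℕ} (hp : p < PL.length) :
    ∀ (fuel i : ℕ), np PL p - i = fuel → ∀ (hi : i ≤ np PL p)
      (α : List (Act k A)), α ∈ listLang ((prog PL p).drop i) →
      ∀ (r rin : List A) (cnt : Fin k → ℕ),
      rin = inWord α ++ r →
      (∀ n t, 0 ≤ (cnt t : ℤ) + dsum (α.take n) t) →
      (∀ t, (cnt t : ℤ) + dsum α t = 0) →
    Reaches PL (cfg PL (some (p, i, 0)) ⟨hp, hi, Nat.zero_le _⟩ rin cnt)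
      (cfg PL (some (p, np PL p, 0)) ⟨hp, le_refl _, Nat.zero_le _⟩ r (fun _ => 0)) := by
  intro fuel
  induction fuel with
  | zero =>
    intro i hfi hi α hα r rin cnt hrin hfeas htot
    have hieq : i = np PL p := by omega
    subst hieq
    rw [show (prog PL p).drop (np PL p) = [] from List.drop_length] at hα
    have hαe : α = [] := hα
    subst hαe
    have h1 : rin = r := by simpa using hrin
    have h2 : cnt = fun _ => 0 := by
      funext t
      have := htot t
      simp only [dsum_nil, add_zero] at this
      exact_mod_cast this
    subst h1; subst h2
    exact reaches_refl PL _
  | succ n ih =>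
    intro i hfi hi α hα r rin cnt hrin hfeas htot
    have hilt : i < np PL p := by omega
    have hdrop : (prog PL p).drop i = item PL p i :: (prog PL p).drop (i + 1) := by
      rw [item_eq PL hilt]
      exact List.drop_eq_getElem_cons hilt
    rw [hdrop] at hα
    obtain ⟨γ, hγ, β, hβ, rfl⟩ := Language.mem_mul.1 hα
    have hnn : ∀ t, 0 ≤ (cnt t : ℤ) + dsum γ t := by
      intro t
      have := feas_append_left hfeas γ.length t
      rwa [List.take_length] at this
    set cnt₁ : Fin k → ℕ := fun t => ((cnt t : ℤ) + dsum γ t).toNat with hcnt₁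
    have h1 : ∀ t, ((cnt₁ t : ℕ) : ℤ) = (cnt t : ℤ) + dsum γ t := by
      intro t; rw [hcnt₁]; exact Int.toNat_of_nonneg (hnn t)
    have hzero1 : i + 1 = np PL p → cnt₁ = fun _ => 0 := by
      intro hnp
      have hβe : β = [] := by
        have : (prog PL p).drop (i + 1) = [] := by
          have : np PL p ≤ i + 1 := le_of_eq hnp.symm
          exact List.drop_eq_nil_of_le this
        rw [this] at hβ
        exact hβ
      subst hβe
      funext t
      have h2 := htot t
      rw [List.append_nil] at h2
      have := h1 t
      omega
    set tst : Fin k → Bool :=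
      if i + 1 = np PL p then (fun _ => false) else fun t => decide (0 < cnt₁ t) with htst
    have htst1 : ∀ t, tst t = true ↔ 0 < cnt₁ t := by
      intro t
      rw [htst]
      by_cases hnp : i + 1 = np PL p
      · rw [if_pos hnp, hzero1 hnp]
        simp
      · rw [if_neg hnp]
        simp
    have htst2 : i + 1 = np PL p → tst = fun _ => false := by
      intro hnp; rw [htst, if_pos hnp]
    have hlast : Reaches PL
        (cfg PL (some (p, i + 1, 0)) ⟨hp, hilt, Nat.zero_le _⟩ (inWord β ++ r) cnt₁)
        (cfg PL (some (p, np PL p, 0)) ⟨hp, le_refl _, Nat.zero_le _⟩ r (fun _ => 0)) := by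
      refine ih (i + 1) (by omega) hilt β hβ r _ cnt₁ rfl
        (feas_append_right h1 hfeas) ?_
      intro t
      have h2 := htot t
      rw [dsum_append] at h2
      rw [h1 t]
      linarith
    by_cases hst : star PL p i = true
    · rw [itemLang, if_pos (show (item PL p i).2 = true from hst)] at hγ
      obtain ⟨c, rfl⟩ := hγ
      have hloops : Reaches PL
          (cfg PL (some (p, i, 0)) ⟨hp, hi, Nat.zero_le _⟩ rin cnt)
          (cfg PL (some (p, i, 0)) ⟨hp, hi, Nat.zero_le _⟩ (inWord β ++ r) cnt₁) := by
        refine reach_loops PL hilt hst c _ _ cnt cnt₁ ?_ (feas_append_left hfeas) h1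
        rw [hrin, inWord_append, List.append_assoc]
        rfl
      refine reaches_trans PL hloops (reaches_trans PL ?_ hlast)
      exact reach_step PL (ATrans.skip p i hilt hst tst htst2) _ _ htst1
        (fun t => Or.inr (Or.inl rfl)) (by intro t; simp) rfl
    · rw [itemLang, if_neg (show ¬ (item PL p i).2 = true from hst)] at hγ
      change γ = _ at hγ
      subst hγ
      have hword : Reaches PL
          (cfg PL (some (p, i, 0)) ⟨hp, hi, Nat.zero_le _⟩ rin cnt)
          (cfg PL (some (p, i, (word PL p i).length))
            ⟨hp, hi, le_refl _⟩ (inWord β ++ r) cnt₁) := by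
        refine reach_word PL hilt _ 0 rfl (Nat.zero_le _) _ _ cnt cnt₁ ?_ ?_ ?_
        · rw [List.drop_zero, hrin, inWord_append, List.append_assoc]
          rfl
        · rw [List.drop_zero]; exact feas_append_left hfeas
        · rw [List.drop_zero]; exact h1
      refine reaches_trans PL hword (reaches_trans PL ?_ hlast)
      exact reach_step PL (ATrans.adv p i hilt tst htst2) _ _ htst1
        (fun t => Or.inr (Or.inl rfl)) (by intro t; simp) rfl

lemma accept_complete {p : ℕ} (hp : p < PL.length) {α : List (Act k A)}
    (hα : α ∈ listLang (prog PL p))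
    (hfeas : ∀ n t, (0 : ℤ) ≤ dsum (α.take n) t) (htot : ∀ t, dsum α t = 0) :
    inWord α ∈ (mkM PL).lang := by
  have h0 : Reaches PL (cfg PL none trivial (inWord α) (fun _ => 0))
      (cfg PL (some (p, 0, 0)) ⟨hp, Nat.zero_le _, Nat.zero_le _⟩ (inWord α) (fun _ => 0)) := by
    refine reach_step PL (ATrans.init p hp) _ _ (by intro t; simp)
      (fun t => Or.inr (Or.inl rfl)) (by intro t; simp) rfl
  have h1 : Reaches PL
      (cfg PL (some (p, 0, 0)) ⟨hp, Nat.zero_le _, Nat.zero_le _⟩ (inWord α) (fun _ => 0))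
      (cfg PL (some (p, np PL p, 0)) ⟨hp, le_refl _, Nat.zero_le _⟩ [] (fun _ => 0)) := by
    refine reach_items PL hp (np PL p) 0 (by omega) (Nat.zero_le _) α
      (by simpa using hα) [] (inWord α) (fun _ => 0) (by simp) ?_ ?_
    · intro n t; simpa using hfeas n t
    · intro t; simpa using htot t
  obtain ⟨ts, hts⟩ := reaches_trans PL h0 h1
  refine ⟨ts, ⟨code PL (some (p, np PL p, 0)),
    code_lt PL ⟨hp, le_refl _, Nat.zero_le _⟩⟩, fun _ => 0, ⟨p, hp, rfl⟩, hts⟩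

/-! #### Homomorphism computations for power products -/

lemma dsum_replicate (c : ℕ) (a : Act k A) (t : Fin k) :
    dsum (List.replicate c a) t = c * a.aDelta t := by
  induction c with
  | zero => simp
  | succ c ih =>
    rw [List.replicate_succ, dsum_cons, ih]
    push_cast
    ring

lemma dsum_flatten_replicate (c : ℕ) (u : List (Act k A)) (t : Fin k) :
    dsum ((List.replicate c u).flatten) t = c * dsum u t := by
  induction c with
  | zero => simp
  | succ c ih =>
    rw [List.replicate_succ, List.flatten_cons, dsum_append, ih]
    push_cast
    ring

lemma inWord_flatten_replicate (c : ℕ) (u : List (Act k A)) :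
    inWord ((List.replicate c u).flatten) = (List.replicate c (inWord u)).flatten := by
  induction c with
  | zero => simp
  | succ c ih => rw [List.replicate_succ, List.replicate_succ, List.flatten_cons,
      List.flatten_cons, inWord_append, ih]

lemma instrWord_flatten_replicate (c : ℕ) (u : List (Act k A)) :
    instrWord ((List.replicate c u).flatten) = (List.replicate c (instrWord u)).flatten := by
  induction c with
  | zero => simp
  | succ c ih => rw [List.replicate_succ, List.replicate_succ, List.flatten_cons,
      List.flatten_cons, instrWord_append, ih]

lemma dsum_flatten_ofFn {mm : ℕ} (g : Fin mm → List (Act k A)) (t : Fin k) :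
    dsum ((List.ofFn g).flatten) t = ∑ j, dsum (g j) t := by
  induction mm with
  | zero => simp
  | succ mm ih =>
    rw [List.ofFn_succ, List.flatten_cons, dsum_append, ih, Fin.sum_univ_succ]

lemma inWord_flatten_ofFn {mm : ℕ} (g : Fin mm → List (Act k A)) :
    inWord ((List.ofFn g).flatten) = (List.ofFn fun j => inWord (g j)).flatten := by
  induction mm with
  | zero => simp
  | succ mm ih =>
    rw [List.ofFn_succ, List.ofFn_succ, List.flatten_cons, List.flatten_cons, inWord_append, ih]

lemma instrWord_flatten_ofFn {mm : ℕ} (g : Fin mm → List (Act k A)) :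
    instrWord ((List.ofFn g).flatten) = (List.ofFn fun j => instrWord (g j)).flatten := by
  induction mm with
  | zero => simp
  | succ mm ih =>
    rw [List.ofFn_succ, List.ofFn_succ, List.flatten_cons, List.flatten_cons, instrWord_append, ih]

lemma starOfFn_elim {mm : ℕ} (h : Fin mm → List (Act k A)) :
    ∀ (α : List (Act k A)), α ∈ listLang (List.ofFn fun t => ((h t, true) : PItem k A)) →
      ∃ c : Fin mm → ℕ,
        α = (List.ofFn fun j => (List.replicate (c j) (h j)).flatten).flatten := by
  induction mm with
  | zero =>
    intro α hα
    have : α = [] := hα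
    exact ⟨fun j => 0, by simp [this]⟩
  | succ mm ih =>
    intro α hα
    rw [List.ofFn_succ, listLang_cons] at hα
    obtain ⟨γ, hγ, β, hβ, rfl⟩ := Language.mem_mul.1 hα
    obtain ⟨c0, rfl⟩ : ∃ c0, γ = (List.replicate c0 (h 0)).flatten := hγ
    obtain ⟨c', rfl⟩ := ih (fun j => h j.succ) β hβ
    refine ⟨Fin.cons c0 c', ?_⟩
    rw [List.ofFn_succ, List.flatten_cons]
    simp [Fin.cons_zero, Fin.cons_succ]

lemma starOfFn_intro {mm : ℕ} (h : Fin mm → List (Act k A)) (c : Fin mm → ℕ) :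
    (List.ofFn fun j => (List.replicate (c j) (h j)).flatten).flatten
      ∈ listLang (List.ofFn fun t => ((h t, true) : PItem k A)) := by
  induction mm with
  | zero => exact rfl
  | succ mm ih =>
    rw [List.ofFn_succ (f := fun j => (List.replicate (c j) (h j)).flatten), List.flatten_cons,
      List.ofFn_succ, listLang_cons]
    exact ⟨_, ⟨c 0, rfl⟩, _, ih (fun j => h j.succ) (fun j => c j.succ), rfl⟩

/-! #### wordsPow / lettersPow helpers -/

lemma wordsPow_nil {ns : Fin ([] : List (List A)).length → ℕ} : wordsPow [] ns = [] := rfl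

lemma wordsPow_cons (x : List A) (xs : List (List A)) (ns : Fin (xs.length + 1) → ℕ) :
    wordsPow (x :: xs) ns
      = (List.replicate (ns 0) x).flatten ++ wordsPow xs (fun j => ns j.succ) := by
  unfold wordsPow
  rw [List.ofFn_succ, List.flatten_cons]
  rfl

lemma lettersPow_cons (x : A) (xs : List A) (ns : Fin (xs.length + 1) → ℕ) :
    lettersPow (x :: xs) ns
      = List.replicate (ns 0) x ++ lettersPow xs (fun j => ns j.succ) := by
  unfold lettersPow
  rw [List.ofFn_succ, List.flatten_cons]
  rfl

lemma mem_boundedLang_nil {xs : List (List A)} : [] ∈ boundedLang xs := by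
  refine ⟨fun _ => 0, ?_⟩
  induction xs with
  | nil => rfl
  | cons x xs ih => rw [wordsPow_cons]; simpa using ih

lemma mem_boundedLang_cons {x : List A} {xs : List (List A)} {u w : List A}
    (hu : ∃ cc, u = (List.replicate cc x).flatten) (hw : w ∈ boundedLang xs) :
    u ++ w ∈ boundedLang (x :: xs) := by
  obtain ⟨cc, rfl⟩ := hu
  obtain ⟨ns, rfl⟩ := hw
  refine ⟨Fin.cons cc ns, ?_⟩
  rw [wordsPow_cons]
  simp [Fin.cons_zero, Fin.cons_succ]

lemma mem_boundedLang_append {xs ys : List (List A)} {u w : List A}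
    (hu : u ∈ boundedLang xs) (hw : w ∈ boundedLang ys) :
    u ++ w ∈ boundedLang (xs ++ ys) := by
  induction xs generalizing u with
  | nil =>
    obtain ⟨ns, rfl⟩ := hu
    simpa [wordsPow_nil] using hw
  | cons x xs ih =>
    obtain ⟨ns, rfl⟩ := hu
    rw [wordsPow_cons x xs ns, List.append_assoc, List.cons_append]
    exact mem_boundedLang_cons ⟨_, rfl⟩ (ih ⟨_, rfl⟩)

lemma pow_mem_boundedLang_ofFn {mm : ℕ} (g : Fin mm → List A) (c : Fin mm → ℕ) :
    (List.ofFn fun j => (List.replicate (c j) (g j)).flatten).flatten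
      ∈ boundedLang (List.ofFn g) := by
  induction mm with
  | zero => exact mem_boundedLang_nil
  | succ mm ih =>
    rw [List.ofFn_succ (f := fun j => (List.replicate (c j) (g j)).flatten), List.flatten_cons,
      List.ofFn_succ]
    exact mem_boundedLang_cons ⟨c 0, rfl⟩ (ih (fun j => g j.succ) (fun j => c j.succ))

lemma mem_letterLang_nil {A' : Type} : ([] : List A') ∈ letterLang ([] : List A') :=
  ⟨fun _ => 0, rfl⟩

lemma mem_letterLang_cons {A' : Type} {x : A'} {xs : List A'} {u w : List A'}
    (hu : ∃ cc, u = List.replicate cc x) (hw : w ∈ letterLang xs) :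
    u ++ w ∈ letterLang (x :: xs) := by
  obtain ⟨cc, rfl⟩ := hu
  obtain ⟨ns, rfl⟩ := hw
  refine ⟨Fin.cons cc ns, ?_⟩
  rw [lettersPow_cons]
  simp [Fin.cons_zero, Fin.cons_succ]

lemma pow_mem_letterLang_ofFn {A' : Type} {mm : ℕ} (g : Fin mm → A') (c : Fin mm → ℕ) :
    (List.ofFn fun j => List.replicate (c j) (g j)).flatten ∈ letterLang (List.ofFn g) := by
  induction mm with
  | zero => exact mem_letterLang_nil
  | succ mm ih =>
    rw [List.ofFn_succ (f := fun j => List.replicate (c j) (g j)), List.flatten_cons,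
      List.ofFn_succ]
    exact mem_letterLang_cons ⟨c 0, rfl⟩ (ih (fun j => g j.succ) (fun j => c j.succ))

lemma mem_of_mem_wordsPow {xs : List (List A)} {ns : Fin xs.length → ℕ} {a : A}
    (h : a ∈ wordsPow xs ns) : ∃ x ∈ xs, a ∈ x := by
  unfold wordsPow at h
  obtain ⟨l, hl, hal⟩ := List.mem_flatten.1 h
  obtain ⟨j, rfl⟩ := (List.mem_ofFn).1 hl
  obtain ⟨l', hl', hal'⟩ := List.mem_flatten.1 hal
  rw [List.eq_of_mem_replicate hl'] at hal'
  exact ⟨xs.get j, List.get_mem _ _, hal'⟩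

lemma mem_of_mem_lettersPow {A' : Type} {xs : List A'} {ns : Fin xs.length → ℕ} {a : A'}
    (h : a ∈ lettersPow xs ns) : a ∈ xs := by
  unfold lettersPow at h
  obtain ⟨l, hl, hal⟩ := List.mem_flatten.1 h
  obtain ⟨j, rfl⟩ := (List.mem_ofFn).1 hl
  rw [List.eq_of_mem_replicate hal]
  exact List.get_mem _ _

lemma flatten_replicate_singleton {X : Type} (c : ℕ) (x : X) :
    (List.replicate c [x]).flatten = List.replicate c x := by
  induction c with
  | zero => rfl
  | succ c ih => rw [List.replicate_succ, List.replicate_succ, List.flatten_cons, ih]; rfl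

lemma flatten_replicate_nil {X : Type} (c : ℕ) :
    (List.replicate c ([] : List X)).flatten = [] := by
  induction c with
  | zero => rfl
  | succ c ih => rw [List.replicate_succ, List.flatten_cons, ih]; rfl

/-! #### The specific programs for bounded semilinear languages -/

lemma flatten_ofFn_nil {X : Type} {mm : ℕ} :
    (List.ofFn fun _ : Fin mm => ([] : List X)).flatten = [] := by
  induction mm with
  | zero => rfl
  | succ mm ih => rw [List.ofFn_succ, List.flatten_cons]; simpa using ih

lemma instrWord_replicate (c : ℕ) (a : Act k A) :
    instrWord (List.replicate c a) = (List.replicate c a.aInstr).flatten := by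
  simp [instrWord, List.map_replicate]

lemma inWord_replicate (c : ℕ) (a : Act k A) :
    inWord (List.replicate c a) = (List.replicate c a.aInput).flatten := by
  simp [inWord, List.map_replicate]

def incW {m : ℕ} (v : Fin m → ℕ) : List (Act (m + 1) A) :=
  (List.ofFn fun t : Fin m => List.replicate (v t) (Act.inc (A := A) t.castSucc)).flatten

def decW {m : ℕ} (v : Fin m → ℕ) : List (Act (m + 1) A) :=
  (List.ofFn fun t : Fin m => List.replicate (v t) (Act.dec (A := A) t.castSucc)).flatten

def cIW {m : ℕ} (v : Fin m → ℕ) : List (Instr (m + 1)) :=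
  (List.ofFn fun t : Fin m => List.replicate (v t) (Instr.C t.castSucc)).flatten

def dIW {m : ℕ} (v : Fin m → ℕ) : List (Instr (m + 1)) :=
  (List.ofFn fun t : Fin m => List.replicate (v t) (Instr.D t.castSucc)).flatten

lemma instrWord_incW {m : ℕ} (v : Fin m → ℕ) : instrWord (incW (A := A) v) = cIW v := by
  rw [incW, instrWord_flatten_ofFn, cIW,
    show (fun j : Fin m => instrWord (List.replicate (v j) (Act.inc (A := A) j.castSucc)))
      = (fun j : Fin m => List.replicate (v j) (Instr.C j.castSucc)) from
      funext fun j => by rw [instrWord_replicate]; exact flatten_replicate_singleton _ _]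

lemma instrWord_decW {m : ℕ} (v : Fin m → ℕ) : instrWord (decW (A := A) v) = dIW v := by
  rw [decW, instrWord_flatten_ofFn, dIW,
    show (fun j : Fin m => instrWord (List.replicate (v j) (Act.dec (A := A) j.castSucc)))
      = (fun j : Fin m => List.replicate (v j) (Instr.D j.castSucc)) from
      funext fun j => by rw [instrWord_replicate]; exact flatten_replicate_singleton _ _]

lemma inWord_incW {m : ℕ} (v : Fin m → ℕ) : inWord (incW (A := A) v) = [] := by
  rw [incW, inWord_flatten_ofFn]
  have : (fun t : Fin m => inWord (List.replicate (v t) (Act.inc (A := A) t.castSucc)))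
      = fun _ => [] := by
    funext t
    rw [inWord_replicate]
    exact flatten_replicate_nil _
  rw [this, flatten_ofFn_nil]

lemma inWord_decW {m : ℕ} (v : Fin m → ℕ) : inWord (decW (A := A) v) = [] := by
  rw [decW, inWord_flatten_ofFn]
  have : (fun t : Fin m => inWord (List.replicate (v t) (Act.dec (A := A) t.castSucc)))
      = fun _ => [] := by
    funext t
    rw [inWord_replicate]
    exact flatten_replicate_nil _
  rw [this, flatten_ofFn_nil]

lemma dsum_incW_castSucc {m : ℕ} (v : Fin m → ℕ) (t0 : Fin m) :
    dsum (incW (A := A) v) t0.castSucc = (v t0 : ℤ) := by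
  rw [incW, dsum_flatten_ofFn]
  have h1 : ∀ t : Fin m,
      dsum (List.replicate (v t) (Act.inc (A := A) t.castSucc)) t0.castSucc
      = if t = t0 then (v t : ℤ) else 0 := by
    intro t
    rw [dsum_replicate]
    by_cases h : t = t0
    · subst h; simp [Act.aDelta]
    · have h' : ¬ (Fin.castSucc t0 = Fin.castSucc t) := by
        simp only [Fin.castSucc_inj]
        exact fun he => h (he.symm)
      simp [Act.aDelta, h', h]
  rw [Finset.sum_congr rfl (fun t _ => h1 t)]
  simp

lemma dsum_incW_last {m : ℕ} (v : Fin m → ℕ) :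
    dsum (incW (A := A) v) (Fin.last m) = 0 := by
  rw [incW, dsum_flatten_ofFn]
  refine Finset.sum_eq_zero fun t _ => ?_
  rw [dsum_replicate]
  have h' : ¬ (Fin.last m = Fin.castSucc t) := by
    intro he
    exact absurd (he ▸ Fin.castSucc_lt_last t) (lt_irrefl _)
  simp [Act.aDelta, h']

lemma dsum_decW_castSucc {m : ℕ} (v : Fin m → ℕ) (t0 : Fin m) :
    dsum (decW (A := A) v) t0.castSucc = -(v t0 : ℤ) := by
  rw [decW, dsum_flatten_ofFn]
  have h1 : ∀ t : Fin m,
      dsum (List.replicate (v t) (Act.dec (A := A) t.castSucc)) t0.castSucc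
      = if t = t0 then -(v t : ℤ) else 0 := by
    intro t
    rw [dsum_replicate]
    by_cases h : t = t0
    · subst h; simp [Act.aDelta]
    · have h' : ¬ (Fin.castSucc t0 = Fin.castSucc t) := by
        simp only [Fin.castSucc_inj]
        exact fun he => h (he.symm)
      simp [Act.aDelta, h', h]
  rw [Finset.sum_congr rfl (fun t _ => h1 t)]
  simp

lemma dsum_decW_last {m : ℕ} (v : Fin m → ℕ) :
    dsum (decW (A := A) v) (Fin.last m) = 0 := by
  rw [decW, dsum_flatten_ofFn]
  refine Finset.sum_eq_zero fun t _ => ?_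
  rw [dsum_replicate]
  have h' : ¬ (Fin.last m = Fin.castSucc t) := by
    intro he
    exact absurd (he ▸ Fin.castSucc_lt_last t) (lt_irrefl _)
  simp [Act.aDelta, h']

lemma mem_incW_elim {m : ℕ} {v : Fin m → ℕ} {a : Act (m + 1) A} (ha : a ∈ incW (A := A) v) :
    ∃ t : Fin m, a = Act.inc t.castSucc := by
  obtain ⟨l, hl, hal⟩ := List.mem_flatten.1 ha
  obtain ⟨t, rfl⟩ := (List.mem_ofFn).1 hl
  exact ⟨t, List.eq_of_mem_replicate hal⟩

lemma mem_decW_elim {m : ℕ} {v : Fin m → ℕ} {a : Act (m + 1) A} (ha : a ∈ decW (A := A) v) :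
    ∃ t : Fin m, a = Act.dec t.castSucc := by
  obtain ⟨l, hl, hal⟩ := List.mem_flatten.1 ha
  obtain ⟨t, rfl⟩ := (List.mem_ofFn).1 hl
  exact ⟨t, List.eq_of_mem_replicate hal⟩

lemma mem_cIW_elim {m : ℕ} {v : Fin m → ℕ} {x : Instr (m + 1)} (hx : x ∈ cIW v) :
    ∃ t : Fin m, x = Instr.C t.castSucc := by
  obtain ⟨l, hl, hal⟩ := List.mem_flatten.1 hx
  obtain ⟨t, rfl⟩ := (List.mem_ofFn).1 hl
  exact ⟨t, List.eq_of_mem_replicate hal⟩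

lemma mem_dIW_elim {m : ℕ} {v : Fin m → ℕ} {x : Instr (m + 1)} (hx : x ∈ dIW v) :
    ∃ t : Fin m, x = Instr.D t.castSucc := by
  obtain ⟨l, hl, hal⟩ := List.mem_flatten.1 hx
  obtain ⟨t, rfl⟩ := (List.mem_ofFn).1 hl
  exact ⟨t, List.eq_of_mem_replicate hal⟩

/-! blocks -/

def blockB (ws : List (List A)) (t : Fin ws.length) : List (Act (ws.length + 1) A) :=
  Act.dec t.castSucc :: (ws.get t).map Act.read

def blockA (ws : List (List A)) (t : Fin ws.length) : List (Act (ws.length + 1) A) :=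
  Act.inc t.castSucc :: (ws.get t).map Act.read

lemma inWord_map_read {u : List A} : inWord (u.map (Act.read (k := k))) = u := by
  induction u with
  | nil => rfl
  | cons a u ih => rw [List.map_cons, inWord_cons, ih]; rfl

lemma dsum_map_read {u : List A} (t : Fin k) : dsum (u.map Act.read) t = 0 := by
  induction u with
  | nil => rfl
  | cons a u ih => rw [List.map_cons, dsum_cons, ih]; simp [Act.aDelta]

lemma instrWord_map_read {u : List A} : instrWord (u.map (Act.read (k := k))) = [] := by
  induction u with
  | nil => rfl
  | cons a u ih => rw [List.map_cons, instrWord_cons, ih]; rfl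

lemma inWord_blockB (ws : List (List A)) (t : Fin ws.length) :
    inWord (blockB ws t) = ws.get t := by
  rw [blockB, inWord_cons, inWord_map_read]; rfl

lemma inWord_blockA (ws : List (List A)) (t : Fin ws.length) :
    inWord (blockA ws t) = ws.get t := by
  rw [blockA, inWord_cons, inWord_map_read]; rfl

lemma instrWord_blockB (ws : List (List A)) (t : Fin ws.length) :
    instrWord (blockB ws t) = [Instr.D t.castSucc] := by
  rw [blockB, instrWord_cons, instrWord_map_read]; rfl

lemma instrWord_blockA (ws : List (List A)) (t : Fin ws.length) :
    instrWord (blockA ws t) = [Instr.C t.castSucc] := by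
  rw [blockA, instrWord_cons, instrWord_map_read]; rfl

lemma dsum_blockB_castSucc (ws : List (List A)) (t t0 : Fin ws.length) :
    dsum (blockB ws t) t0.castSucc = if t = t0 then (-1 : ℤ) else 0 := by
  rw [blockB, dsum_cons, dsum_map_read, add_zero]
  by_cases h : t = t0
  · subst h; simp [Act.aDelta]
  · have h' : ¬ (Fin.castSucc t0 = Fin.castSucc t) := by
      simp only [Fin.castSucc_inj]
      exact fun he => h (he.symm)
    simp [Act.aDelta, h', h]

lemma dsum_blockB_last (ws : List (List A)) (t : Fin ws.length) :
    dsum (blockB ws t) (Fin.last ws.length) = 0 := by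
  rw [blockB, dsum_cons, dsum_map_read, add_zero]
  have h' : ¬ (Fin.last ws.length = Fin.castSucc t) := by
    intro he
    exact absurd (he ▸ Fin.castSucc_lt_last t) (lt_irrefl _)
  simp [Act.aDelta, h']

lemma dsum_blockA_castSucc (ws : List (List A)) (t t0 : Fin ws.length) :
    dsum (blockA ws t) t0.castSucc = if t = t0 then (1 : ℤ) else 0 := by
  rw [blockA, dsum_cons, dsum_map_read, add_zero]
  by_cases h : t = t0
  · subst h; simp [Act.aDelta]
  · have h' : ¬ (Fin.castSucc t0 = Fin.castSucc t) := by
      simp only [Fin.castSucc_inj]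
      exact fun he => h (he.symm)
    simp [Act.aDelta, h', h]

lemma dsum_blockA_last (ws : List (List A)) (t : Fin ws.length) :
    dsum (blockA ws t) (Fin.last ws.length) = 0 := by
  rw [blockA, dsum_cons, dsum_map_read, add_zero]
  have h' : ¬ (Fin.last ws.length = Fin.castSucc t) := by
    intro he
    exact absurd (he ▸ Fin.castSucc_lt_last t) (lt_irrefl _)
  simp [Act.aDelta, h']

/-! generic power computations -/

lemma inWord_powOfFn {mm : ℕ} (h : Fin mm → List (Act k A)) (c : Fin mm → ℕ) :
    inWord ((List.ofFn fun j => (List.replicate (c j) (h j)).flatten).flatten)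
      = (List.ofFn fun j => (List.replicate (c j) (inWord (h j))).flatten).flatten := by
  rw [inWord_flatten_ofFn,
    show (fun j => inWord ((List.replicate (c j) (h j)).flatten))
      = (fun j => (List.replicate (c j) (inWord (h j))).flatten) from
      funext fun j => inWord_flatten_replicate _ _]

lemma instrWord_powOfFn {mm : ℕ} (h : Fin mm → List (Act k A)) (c : Fin mm → ℕ) :
    instrWord ((List.ofFn fun j => (List.replicate (c j) (h j)).flatten).flatten)
      = (List.ofFn fun j => (List.replicate (c j) (instrWord (h j))).flatten).flatten := by
  rw [instrWord_flatten_ofFn,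
    show (fun j => instrWord ((List.replicate (c j) (h j)).flatten))
      = (fun j => (List.replicate (c j) (instrWord (h j))).flatten) from
      funext fun j => instrWord_flatten_replicate _ _]

lemma dsum_powOfFn {mm : ℕ} (h : Fin mm → List (Act k A)) (c : Fin mm → ℕ) (t : Fin k) :
    dsum ((List.ofFn fun j => (List.replicate (c j) (h j)).flatten).flatten) t
      = ∑ j, (c j : ℤ) * dsum (h j) t := by
  rw [dsum_flatten_ofFn]
  exact Finset.sum_congr rfl fun j _ => dsum_flatten_replicate _ _ _

lemma mem_powOfFn_elim {mm : ℕ} {h : Fin mm → List (Act k A)} {c : Fin mm → ℕ}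
    {a : Act k A}
    (ha : a ∈ (List.ofFn fun j => (List.replicate (c j) (h j)).flatten).flatten) :
    ∃ j, a ∈ h j := by
  obtain ⟨l, hl, hal⟩ := List.mem_flatten.1 ha
  obtain ⟨j, rfl⟩ := (List.mem_ofFn).1 hl
  obtain ⟨l', hl', hal'⟩ := List.mem_flatten.1 hal
  rw [List.eq_of_mem_replicate hl'] at hal'
  exact ⟨j, hal'⟩

lemma dsum_nonneg_of {α : List (Act k A)} (hα : ∀ a ∈ α, ∀ t, 0 ≤ a.aDelta t) (t : Fin k) :
    0 ≤ dsum α t := by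
  induction α with
  | nil => simp
  | cons a α ih =>
    rw [dsum_cons]
    have := hα a (List.mem_cons_self) t
    have := ih (fun b hb => hα b (List.mem_cons_of_mem _ hb))
    linarith

lemma dsum_nonpos_of {α : List (Act k A)} (hα : ∀ a ∈ α, ∀ t, a.aDelta t ≤ 0) (t : Fin k) :
    dsum α t ≤ 0 := by
  induction α with
  | nil => simp
  | cons a α ih =>
    rw [dsum_cons]
    have := hα a (List.mem_cons_self) t
    have := ih (fun b hb => hα b (List.mem_cons_of_mem _ hb))
    linarith

lemma feas_of_incdec {α β : List (Act k A)}
    (hα : ∀ a ∈ α, ∀ t, 0 ≤ a.aDelta t) (hβ : ∀ a ∈ β, ∀ t, a.aDelta t ≤ 0)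
    (htot : ∀ t, dsum (α ++ β) t = 0) :
    ∀ n t, (0 : ℤ) ≤ dsum ((α ++ β).take n) t := by
  intro n t
  rcases le_or_gt n α.length with hn | hn
  · rw [List.take_append_of_le_length hn]
    exact dsum_nonneg_of (fun a ha => hα a (List.mem_of_mem_take ha)) t
  · rw [List.take_append, List.take_of_length_le (le_of_lt hn)]
    rw [dsum_append]
    have h1 : dsum (β.take (n - α.length)) t = dsum β t - dsum (β.drop (n - α.length)) t := by
      have := dsum_append (β.take (n - α.length)) (β.drop (n - α.length)) t
      rw [List.take_append_drop] at this
      linarith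
    have h2 : dsum (β.drop (n - α.length)) t ≤ 0 :=
      dsum_nonpos_of (fun a ha => hβ a (List.mem_of_mem_drop ha)) t
    have h3 := htot t
    rw [dsum_append] at h3
    linarith

/-! #### Machine B : `BD_i LB_d` -/

def progB (ws : List (List A)) (e : (Fin ws.length → ℕ) × List (Fin ws.length → ℕ)) :
    Prog (ws.length + 1) A :=
  (incW e.1, false) ::
    ((List.ofFn fun j : Fin e.2.length => ((incW (e.2.get j), true) : PItem (ws.length + 1) A))
      ++ (List.ofFn fun t : Fin ws.length => ((blockB ws t, true) : PItem (ws.length + 1) A)))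

def bwordB (ws : List (List A)) (e : (Fin ws.length → ℕ) × List (Fin ws.length → ℕ))
    (c : Fin e.2.length → ℕ) (d : Fin ws.length → ℕ) : List (Act (ws.length + 1) A) :=
  incW e.1 ++
    ((List.ofFn fun j => (List.replicate (c j) (incW (e.2.get j))).flatten).flatten ++
     (List.ofFn fun t => (List.replicate (d t) (blockB ws t)).flatten).flatten)

lemma memProgB_elim {ws : List (List A)} {e : (Fin ws.length → ℕ) × List (Fin ws.length → ℕ)}
    {α : List (Act (ws.length + 1) A)} (hα : α ∈ listLang (progB ws e)) :
    ∃ (c : Fin e.2.length → ℕ) (d : Fin ws.length → ℕ), α = bwordB ws e c d := by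
  rw [progB, listLang_cons] at hα
  obtain ⟨γ0, hγ0, rest, hrest, rfl⟩ := Language.mem_mul.1 hα
  have hγ0' : γ0 = incW e.1 := by
    rw [itemLang] at hγ0
    simp at hγ0; exact hγ0
  rw [listLang_append] at hrest
  obtain ⟨α1, h1, α2, h2, rfl⟩ := Language.mem_mul.1 hrest
  obtain ⟨c, rfl⟩ := starOfFn_elim _ _ h1
  obtain ⟨d, rfl⟩ := starOfFn_elim _ _ h2
  subst hγ0'
  exact ⟨c, d, rfl⟩

lemma memProgB_intro {ws : List (List A)} {e : (Fin ws.length → ℕ) × List (Fin ws.length → ℕ)}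
    (c : Fin e.2.length → ℕ) (d : Fin ws.length → ℕ) :
    bwordB ws e c d ∈ listLang (progB ws e) := by
  rw [progB, listLang_cons]
  refine Language.mem_mul.2 ⟨incW e.1, ?_, _, ?_, rfl⟩
  · rw [itemLang]; exact rfl
  · rw [listLang_append]
    exact Language.mem_mul.2 ⟨_, starOfFn_intro _ _, _, starOfFn_intro _ _, rfl⟩

lemma inWord_bwordB {ws : List (List A)} (e : (Fin ws.length → ℕ) × List (Fin ws.length → ℕ))
    (c : Fin e.2.length → ℕ) (d : Fin ws.length → ℕ) :
    inWord (bwordB ws e c d) = wordsPow ws d := by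
  rw [bwordB, inWord_append, inWord_append, inWord_incW, inWord_powOfFn, inWord_powOfFn,
    show (fun j => (List.replicate (c j) (inWord (incW (A := A) (e.2.get j)))).flatten)
      = (fun _ => ([] : List A)) from
      funext fun j => by rw [inWord_incW]; exact flatten_replicate_nil _,
    show (fun t => (List.replicate (d t) (inWord (blockB ws t))).flatten)
      = (fun t => (List.replicate (d t) (ws.get t)).flatten) from
      funext fun t => by rw [inWord_blockB],
    flatten_ofFn_nil]
  rfl

lemma dsum_bwordB_castSucc {ws : List (List A)}
    (e : (Fin ws.length → ℕ) × List (Fin ws.length → ℕ))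
    (c : Fin e.2.length → ℕ) (d : Fin ws.length → ℕ) (t0 : Fin ws.length) :
    dsum (bwordB ws e c d) t0.castSucc
      = (e.1 t0 : ℤ) + (∑ j, (c j : ℤ) * (e.2.get j t0 : ℤ)) - (d t0 : ℤ) := by
  rw [bwordB, dsum_append, dsum_append, dsum_incW_castSucc, dsum_powOfFn, dsum_powOfFn]
  have h2 : ∑ t, (d t : ℤ) * dsum (blockB ws t) t0.castSucc = -(d t0 : ℤ) := by
    rw [Finset.sum_congr rfl (fun t _ => by rw [dsum_blockB_castSucc])]
    have h3 : ∀ t, (d t : ℤ) * (if t = t0 then (-1 : ℤ) else 0)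
        = if t = t0 then -(d t : ℤ) else 0 := by
      intro t; by_cases h : t = t0 <;> simp [h]
    rw [Finset.sum_congr rfl (fun t _ => h3 t)]
    simp
  rw [Finset.sum_congr rfl (fun j _ => by rw [dsum_incW_castSucc]), h2]
  ring

lemma dsum_bwordB_last {ws : List (List A)}
    (e : (Fin ws.length → ℕ) × List (Fin ws.length → ℕ))
    (c : Fin e.2.length → ℕ) (d : Fin ws.length → ℕ) :
    dsum (bwordB ws e c d) (Fin.last ws.length) = 0 := by
  rw [bwordB, dsum_append, dsum_append, dsum_incW_last, dsum_powOfFn, dsum_powOfFn]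
  have h1 : ∑ j, (c j : ℤ) * dsum (incW (A := A) (e.2.get j)) (Fin.last ws.length) = 0 :=
    Finset.sum_eq_zero fun j _ => by rw [dsum_incW_last, mul_zero]
  have h2 : ∑ t, (d t : ℤ) * dsum (blockB ws t) (Fin.last ws.length) = 0 :=
    Finset.sum_eq_zero fun t _ => by rw [dsum_blockB_last, mul_zero]
  rw [h1, h2]
  simp

lemma instrWord_bwordB {ws : List (List A)}
    (e : (Fin ws.length → ℕ) × List (Fin ws.length → ℕ))
    (c : Fin e.2.length → ℕ) (d : Fin ws.length → ℕ) :
    instrWord (bwordB ws e c d)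
      = (cIW e.1 ++ (List.ofFn fun j => (List.replicate (c j) (cIW (e.2.get j))).flatten).flatten)
        ++ (List.ofFn fun t : Fin ws.length =>
            List.replicate (d t) (Instr.D t.castSucc)).flatten := by
  rw [bwordB, instrWord_append, instrWord_append, instrWord_incW, instrWord_powOfFn,
    instrWord_powOfFn,
    show (fun j => (List.replicate (c j) (instrWord (incW (A := A) (e.2.get j)))).flatten)
      = (fun j => (List.replicate (c j) (cIW (e.2.get j))).flatten) from
      funext fun j => by rw [instrWord_incW],
    show (fun t => (List.replicate (d t) (instrWord (blockB ws t))).flatten)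
      = (fun t : Fin ws.length => List.replicate (d t) (Instr.D t.castSucc)) from
      funext fun t => by rw [instrWord_blockB]; exact flatten_replicate_singleton _ _,
    List.append_assoc]

def PLB (ws : List (List A)) (comps : List ((Fin ws.length → ℕ) × List (Fin ws.length → ℕ))) :
    List (Prog (ws.length + 1) A) := comps.map (progB ws)

def fB {ws : List (List A)} (e : (Fin ws.length → ℕ) × List (Fin ws.length → ℕ)) :
    List (List (Instr (ws.length + 1))) :=
  cIW e.1 :: (List.ofFn fun j : Fin e.2.length => cIW (e.2.get j))

def wsIB (ws : List (List A)) (comps : List ((Fin ws.length → ℕ) × List (Fin ws.length → ℕ))) :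
    List (List (Instr (ws.length + 1))) := (comps.map fB).flatten

def bsIB (ws : List (List A)) : List (Instr (ws.length + 1)) :=
  List.ofFn fun t : Fin ws.length => Instr.D t.castSucc

def IB (ws : List (List A)) (comps : List ((Fin ws.length → ℕ) × List (Fin ws.length → ℕ))) :
    Language (Instr (ws.length + 1)) := boundedLang (wsIB ws comps) * letterLang (bsIB ws)

lemma comps_split {X : Type} {comps : List X} {p : ℕ} (hp : p < comps.length) :
    comps = comps.take p ++ comps.get ⟨p, hp⟩ :: comps.drop (p + 1) := by
  conv_lhs => rw [← List.take_append_drop p comps]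
  rw [List.drop_eq_getElem_cons hp]
  rfl

lemma instr_memB {ws : List (List A)}
    {comps : List ((Fin ws.length → ℕ) × List (Fin ws.length → ℕ))} {p : ℕ}
    (hp : p < comps.length) (c : Fin ((comps.get ⟨p, hp⟩).2).length → ℕ)
    (d : Fin ws.length → ℕ) :
    instrWord (bwordB ws (comps.get ⟨p, hp⟩) c d) ∈ IB ws comps := by
  rw [instrWord_bwordB]
  refine Language.mem_mul.2 ⟨_, ?_, _, pow_mem_letterLang_ofFn _ d, rfl⟩
  have hsplit : wsIB ws comps = ((comps.take p).map fB).flatten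
      ++ (fB (comps.get ⟨p, hp⟩) ++ ((comps.drop (p + 1)).map fB).flatten) := by
    rw [wsIB]
    conv_lhs => rw [comps_split hp]
    rw [List.map_append, List.map_cons, List.flatten_append, List.flatten_cons]
  rw [hsplit]
  have hchunk : cIW (comps.get ⟨p, hp⟩).1
      ++ (List.ofFn fun j => (List.replicate (c j) (cIW ((comps.get ⟨p, hp⟩).2.get j))).flatten).flatten
      ∈ boundedLang (fB (comps.get ⟨p, hp⟩)) := by
    rw [fB]
    exact mem_boundedLang_cons ⟨1, by simp⟩ (pow_mem_boundedLang_ofFn _ c)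
  have := mem_boundedLang_append
    (mem_boundedLang_nil (xs := ((comps.take p).map fB).flatten))
    (mem_boundedLang_append hchunk
      (mem_boundedLang_nil (xs := ((comps.drop (p + 1)).map fB).flatten)))
  simpa using this

lemma wsIB_inc {ws : List (List A)}
    {comps : List ((Fin ws.length → ℕ) × List (Fin ws.length → ℕ))} :
    ∀ u ∈ wsIB ws comps, ∀ x ∈ u, Instr.isInc x := by
  intro u hu x hxu
  obtain ⟨l, hl, hul⟩ := List.mem_flatten.1 hu
  obtain ⟨e, he, rfl⟩ := List.mem_map.1 hl
  rw [fB] at hul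
  rcases List.mem_cons.1 hul with rfl | hmem
  · obtain ⟨t, rfl⟩ := mem_cIW_elim hxu; trivial
  · obtain ⟨j, rfl⟩ := (List.mem_ofFn).1 hmem
    obtain ⟨t, rfl⟩ := mem_cIW_elim hxu; trivial

lemma bsIB_dec {ws : List (List A)} : ∀ x ∈ bsIB ws, Instr.isDec x := by
  intro x hx
  obtain ⟨t, rfl⟩ := (List.mem_ofFn).1 hx
  trivial

lemma IB_mem {ws : List (List A)}
    (comps : List ((Fin ws.length → ℕ) × List (Fin ws.length → ℕ))) :
    IB ws comps ∈ famBDiLBd (ws.length + 1) := by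
  refine ⟨⟨wsIB ws comps, bsIB ws, wsIB_inc, bsIB_dec, rfl⟩, ?_⟩
  intro w hw
  obtain ⟨u, hu, v, hv, rfl⟩ := Language.mem_mul.1 hw
  obtain ⟨ns, rfl⟩ := hu
  obtain ⟨ns', rfl⟩ := hv
  apply incBeforeDec_of_split
  · intro x hx
    obtain ⟨uu, huu, hxuu⟩ := mem_of_mem_wordsPow hx
    exact wsIB_inc uu huu x hxuu
  · intro x hx
    exact bsIB_dec x (mem_of_mem_lettersPow hx)

lemma progB_prog {ws : List (List A)}
    {comps : List ((Fin ws.length → ℕ) × List (Fin ws.length → ℕ))} {p : ℕ}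
    (hp : p < comps.length) :
    prog (PLB ws comps) p = progB ws (comps.get ⟨p, hp⟩) := by
  rw [prog_eq _ (by simpa [PLB] using hp)]
  simp [PLB]

lemma satB {ws : List (List A)}
    (comps : List ((Fin ws.length → ℕ) × List (Fin ws.length → ℕ))) :
    (mkM (PLB ws comps)).Satisfies (IB ws comps) := by
  intro w ts ⟨q, hq, hd⟩
  obtain ⟨-, p, hp, α, hα, hinstr, -, -⟩ := accept_sound _ hq hd
  have hp' : p < comps.length := by simpa [PLB] using hp
  rw [progB_prog hp'] at hα
  obtain ⟨c, d, rfl⟩ := memProgB_elim hα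
  erw [hinstr]
  exact instr_memB hp' c d

lemma wfB {ws : List (List A)}
    (comps : List ((Fin ws.length → ℕ) × List (Fin ws.length → ℕ))) :
    (mkM (PLB ws comps)).WellFormed := by
  apply mkM_wellformed
  intro p hp
  have hp' : p < comps.length := by simpa [PLB] using hp
  rw [progB_prog hp']
  refine ⟨(incW (comps.get ⟨p, hp'⟩).1, false)
      :: (List.ofFn fun j : Fin ((comps.get ⟨p, hp'⟩).2).length =>
          ((incW ((comps.get ⟨p, hp'⟩).2.get j), true) : PItem (ws.length + 1) A)),
    List.ofFn fun t : Fin ws.length => ((blockB ws t, true) : PItem (ws.length + 1) A),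
    by rw [progB, List.cons_append], ?_, ?_⟩
  · intro it hit a ha x hx
    rcases List.mem_cons.1 hit with rfl | hmem
    · obtain ⟨t, rfl⟩ := mem_incW_elim ha
      simp only [Act.aInstr, List.mem_singleton] at hx
      subst hx; trivial
    · obtain ⟨j, rfl⟩ := (List.mem_ofFn).1 hmem
      obtain ⟨t, rfl⟩ := mem_incW_elim ha
      simp only [Act.aInstr, List.mem_singleton] at hx
      subst hx; trivial
  · intro it hit a ha x hx
    obtain ⟨t, rfl⟩ := (List.mem_ofFn).1 hit
    have ha' : a ∈ Act.dec (A := A) t.castSucc :: (ws.get t).map Act.read := ha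
    rcases List.mem_cons.1 ha' with rfl | hmem
    · simp only [Act.aInstr, List.mem_singleton] at hx
      subst hx; trivial
    · obtain ⟨b, hb, rfl⟩ := List.mem_map.1 hmem
      simp [Act.aInstr] at hx

lemma aDelta_nonneg_of_not_dec {a : Act k A} (h : ∀ t : Fin k, a ≠ Act.dec t) (t : Fin k) :
    0 ≤ a.aDelta t := by
  cases a with
  | read x => exact le_refl 0
  | inc s => by_cases hs : t = s <;> simp [Act.aDelta, hs]
  | dec s => exact absurd rfl (h s)

lemma aDelta_nonpos_of_not_inc {a : Act k A} (h : ∀ t : Fin k, a ≠ Act.inc t) (t : Fin k) :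
    a.aDelta t ≤ 0 := by
  cases a with
  | read x => exact le_refl 0
  | dec s => by_cases hs : t = s <;> simp [Act.aDelta, hs]
  | inc s => exact absurd rfl (h s)

lemma langB_eq {ws : List (List A)}
    (comps : List ((Fin ws.length → ℕ) × List (Fin ws.length → ℕ))) :
    (mkM (PLB ws comps)).lang
      = {w | ∃ v ∈ {v | ∃ cmp ∈ comps, v ∈ linearSet cmp.1 cmp.2}, w = wordsPow ws v} := by
  apply Set.Subset.antisymm
  · intro w hw
    obtain ⟨ts, q, cnt, hq, hd⟩ := hw
    obtain ⟨-, p, hp, α, hα, -, hweq, hds⟩ := accept_sound _ hq hd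
    have hp' : p < comps.length := by simpa [PLB] using hp
    rw [progB_prog hp'] at hα
    obtain ⟨c, d, rfl⟩ := memProgB_elim hα
    refine ⟨d, ⟨comps.get ⟨p, hp'⟩, List.get_mem _ _, c, ?_⟩, ?_⟩
    · funext t0
      have h1 := hds (t0.castSucc)
      rw [dsum_bwordB_castSucc] at h1
      have h2 : (d t0 : ℤ) = (((comps.get ⟨p, hp'⟩).1 t0
          + ∑ j, c j * (comps.get ⟨p, hp'⟩).2.get j t0 : ℕ) : ℤ) := by
        push_cast
        linarith
      exact_mod_cast h2
    · rw [hweq, inWord_bwordB]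
  · rintro w ⟨v, ⟨cmp, hcmp, cc, hveq⟩, rfl⟩
    obtain ⟨p, hp, hpe⟩ := List.getElem_of_mem hcmp
    have hget : comps.get ⟨p, hp⟩ = cmp := hpe
    have hα : bwordB ws cmp cc v ∈ listLang (prog (PLB ws comps) p) := by
      rw [progB_prog hp, hget]
      exact memProgB_intro cc v
    have hfeas : ∀ n t, (0 : ℤ) ≤ dsum ((bwordB ws cmp cc v).take n) t := by
      have hsplit : bwordB ws cmp cc v
          = (incW cmp.1
              ++ (List.ofFn fun j => (List.replicate (cc j) (incW (cmp.2.get j))).flatten).flatten)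
            ++ (List.ofFn fun t => (List.replicate (v t) (blockB ws t)).flatten).flatten := by
        rw [bwordB, List.append_assoc]
      rw [hsplit]
      apply feas_of_incdec
      · intro a ha t
        rcases List.mem_append.1 ha with h1 | h1
        · obtain ⟨t', rfl⟩ := mem_incW_elim h1
          exact aDelta_nonneg_of_not_dec (fun _ => by simp) t
        · obtain ⟨j, hj⟩ := mem_powOfFn_elim h1
          obtain ⟨t', rfl⟩ := mem_incW_elim hj
          exact aDelta_nonneg_of_not_dec (fun _ => by simp) t
      · intro a ha t
        obtain ⟨t', ht'⟩ := mem_powOfFn_elim ha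
        rw [blockB] at ht'
        rcases List.mem_cons.1 ht' with rfl | hmem
        · exact aDelta_nonpos_of_not_inc (fun _ => by simp) t
        · obtain ⟨b, hb, rfl⟩ := List.mem_map.1 hmem
          exact aDelta_nonpos_of_not_inc (fun _ => by simp) t
      · rw [← hsplit]
        intro t
        refine Fin.lastCases ?_ ?_ t
        · exact dsum_bwordB_last cmp cc v
        · intro t0
          rw [dsum_bwordB_castSucc]
          have : v t0 = cmp.1 t0 + ∑ j, cc j * cmp.2.get j t0 := by rw [hveq]
          have h2 : (v t0 : ℤ) = (cmp.1 t0 : ℤ) + ∑ j, (cc j : ℤ) * (cmp.2.get j t0 : ℤ) := by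
            rw [this]; push_cast; ring
          linarith
    have htot : ∀ t, dsum (bwordB ws cmp cc v) t = 0 := by
      intro t
      refine Fin.lastCases ?_ ?_ t
      · exact dsum_bwordB_last cmp cc v
      · intro t0
        rw [dsum_bwordB_castSucc]
        have h2 : (v t0 : ℤ) = (cmp.1 t0 : ℤ) + ∑ j, (cc j : ℤ) * (cmp.2.get j t0 : ℤ) := by
          rw [hveq]; push_cast; ring
        linarith
    have := accept_complete (PLB ws comps) (by simpa [PLB] using hp) hα hfeas htot
    rwa [inWord_bwordB] at this

/-! #### Machine A : `LB_i BD_d` -/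

def progA (ws : List (List A)) (e : (Fin ws.length → ℕ) × List (Fin ws.length → ℕ)) :
    Prog (ws.length + 1) A :=
  (List.ofFn fun t : Fin ws.length => ((blockA ws t, true) : PItem (ws.length + 1) A))
    ++ ((decW e.1, false)
      :: (List.ofFn fun j : Fin e.2.length => ((decW (e.2.get j), true) : PItem (ws.length + 1) A)))

def awordA (ws : List (List A)) (e : (Fin ws.length → ℕ) × List (Fin ws.length → ℕ))
    (c : Fin e.2.length → ℕ) (d : Fin ws.length → ℕ) : List (Act (ws.length + 1) A) :=
  (List.ofFn fun t => (List.replicate (d t) (blockA ws t)).flatten).flatten ++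
    (decW e.1 ++
      (List.ofFn fun j => (List.replicate (c j) (decW (e.2.get j))).flatten).flatten)

lemma memProgA_elim {ws : List (List A)} {e : (Fin ws.length → ℕ) × List (Fin ws.length → ℕ)}
    {α : List (Act (ws.length + 1) A)} (hα : α ∈ listLang (progA ws e)) :
    ∃ (c : Fin e.2.length → ℕ) (d : Fin ws.length → ℕ), α = awordA ws e c d := by
  rw [progA, listLang_append] at hα
  obtain ⟨α2, h2, rest, hrest, rfl⟩ := Language.mem_mul.1 hα
  obtain ⟨d, rfl⟩ := starOfFn_elim _ _ h2
  rw [listLang_cons] at hrest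
  obtain ⟨γ0, hγ0, α1, h1, rfl⟩ := Language.mem_mul.1 hrest
  have hγ0' : γ0 = decW e.1 := by
    rw [itemLang] at hγ0
    simp at hγ0; exact hγ0
  obtain ⟨c, rfl⟩ := starOfFn_elim _ _ h1
  subst hγ0'
  exact ⟨c, d, rfl⟩

lemma memProgA_intro {ws : List (List A)} {e : (Fin ws.length → ℕ) × List (Fin ws.length → ℕ)}
    (c : Fin e.2.length → ℕ) (d : Fin ws.length → ℕ) :
    awordA ws e c d ∈ listLang (progA ws e) := by
  rw [progA, listLang_append]
  refine Language.mem_mul.2 ⟨_, starOfFn_intro _ _, _, ?_, rfl⟩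
  rw [listLang_cons]
  refine Language.mem_mul.2 ⟨decW e.1, ?_, _, starOfFn_intro _ _, rfl⟩
  rw [itemLang]; exact rfl

lemma inWord_awordA {ws : List (List A)} (e : (Fin ws.length → ℕ) × List (Fin ws.length → ℕ))
    (c : Fin e.2.length → ℕ) (d : Fin ws.length → ℕ) :
    inWord (awordA ws e c d) = wordsPow ws d := by
  rw [awordA, inWord_append, inWord_append, inWord_decW, inWord_powOfFn, inWord_powOfFn,
    show (fun j => (List.replicate (c j) (inWord (decW (A := A) (e.2.get j)))).flatten)
      = (fun _ => ([] : List A)) from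
      funext fun j => by rw [inWord_decW]; exact flatten_replicate_nil _,
    show (fun t => (List.replicate (d t) (inWord (blockA ws t))).flatten)
      = (fun t => (List.replicate (d t) (ws.get t)).flatten) from
      funext fun t => by rw [inWord_blockA],
    flatten_ofFn_nil]
  simp only [List.nil_append, List.append_nil]
  rfl

lemma dsum_awordA_castSucc {ws : List (List A)}
    (e : (Fin ws.length → ℕ) × List (Fin ws.length → ℕ))
    (c : Fin e.2.length → ℕ) (d : Fin ws.length → ℕ) (t0 : Fin ws.length) :
    dsum (awordA ws e c d) t0.castSucc
      = (d t0 : ℤ) - (e.1 t0 : ℤ) - (∑ j, (c j : ℤ) * (e.2.get j t0 : ℤ)) := by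
  rw [awordA, dsum_append, dsum_append, dsum_decW_castSucc, dsum_powOfFn, dsum_powOfFn]
  have h2 : ∑ t, (d t : ℤ) * dsum (blockA ws t) t0.castSucc = (d t0 : ℤ) := by
    rw [Finset.sum_congr rfl (fun t _ => by rw [dsum_blockA_castSucc])]
    have h3 : ∀ t, (d t : ℤ) * (if t = t0 then (1 : ℤ) else 0)
        = if t = t0 then (d t : ℤ) else 0 := by
      intro t; by_cases h : t = t0 <;> simp [h]
    rw [Finset.sum_congr rfl (fun t _ => h3 t)]
    simp
  rw [h2, Finset.sum_congr rfl (fun j _ => by rw [dsum_decW_castSucc])]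
  simp only [mul_neg]
  rw [Finset.sum_neg_distrib]
  ring

lemma dsum_awordA_last {ws : List (List A)}
    (e : (Fin ws.length → ℕ) × List (Fin ws.length → ℕ))
    (c : Fin e.2.length → ℕ) (d : Fin ws.length → ℕ) :
    dsum (awordA ws e c d) (Fin.last ws.length) = 0 := by
  rw [awordA, dsum_append, dsum_append, dsum_decW_last, dsum_powOfFn, dsum_powOfFn]
  have h1 : ∑ j, (c j : ℤ) * dsum (decW (A := A) (e.2.get j)) (Fin.last ws.length) = 0 :=
    Finset.sum_eq_zero fun j _ => by rw [dsum_decW_last, mul_zero]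
  have h2 : ∑ t, (d t : ℤ) * dsum (blockA ws t) (Fin.last ws.length) = 0 :=
    Finset.sum_eq_zero fun t _ => by rw [dsum_blockA_last, mul_zero]
  rw [h1, h2]
  simp

lemma instrWord_awordA {ws : List (List A)}
    (e : (Fin ws.length → ℕ) × List (Fin ws.length → ℕ))
    (c : Fin e.2.length → ℕ) (d : Fin ws.length → ℕ) :
    instrWord (awordA ws e c d)
      = (List.ofFn fun t : Fin ws.length =>
            List.replicate (d t) (Instr.C t.castSucc)).flatten
        ++ (dIW e.1
          ++ (List.ofFn fun j => (List.replicate (c j) (dIW (e.2.get j))).flatten).flatten) := by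
  rw [awordA, instrWord_append, instrWord_append, instrWord_decW, instrWord_powOfFn,
    instrWord_powOfFn,
    show (fun j => (List.replicate (c j) (instrWord (decW (A := A) (e.2.get j)))).flatten)
      = (fun j => (List.replicate (c j) (dIW (e.2.get j))).flatten) from
      funext fun j => by rw [instrWord_decW],
    show (fun t => (List.replicate (d t) (instrWord (blockA ws t))).flatten)
      = (fun t : Fin ws.length => List.replicate (d t) (Instr.C t.castSucc)) from
      funext fun t => by rw [instrWord_blockA]; exact flatten_replicate_singleton _ _]

def PLA (ws : List (List A)) (comps : List ((Fin ws.length → ℕ) × List (Fin ws.length → ℕ))) :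
    List (Prog (ws.length + 1) A) := comps.map (progA ws)

def fA {ws : List (List A)} (e : (Fin ws.length → ℕ) × List (Fin ws.length → ℕ)) :
    List (List (Instr (ws.length + 1))) :=
  dIW e.1 :: (List.ofFn fun j : Fin e.2.length => dIW (e.2.get j))

def wsDA (ws : List (List A)) (comps : List ((Fin ws.length → ℕ) × List (Fin ws.length → ℕ))) :
    List (List (Instr (ws.length + 1))) := (comps.map fA).flatten

def csIA (ws : List (List A)) : List (Instr (ws.length + 1)) :=
  List.ofFn fun t : Fin ws.length => Instr.C t.castSucc

def IA (ws : List (List A)) (comps : List ((Fin ws.length → ℕ) × List (Fin ws.length → ℕ))) :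
    Language (Instr (ws.length + 1)) := letterLang (csIA ws) * boundedLang (wsDA ws comps)

lemma instr_memA {ws : List (List A)}
    {comps : List ((Fin ws.length → ℕ) × List (Fin ws.length → ℕ))} {p : ℕ}
    (hp : p < comps.length) (c : Fin ((comps.get ⟨p, hp⟩).2).length → ℕ)
    (d : Fin ws.length → ℕ) :
    instrWord (awordA ws (comps.get ⟨p, hp⟩) c d) ∈ IA ws comps := by
  rw [instrWord_awordA]
  refine Language.mem_mul.2 ⟨_, pow_mem_letterLang_ofFn _ d, _, ?_, rfl⟩
  have hsplit : wsDA ws comps = ((comps.take p).map fA).flatten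
      ++ (fA (comps.get ⟨p, hp⟩) ++ ((comps.drop (p + 1)).map fA).flatten) := by
    rw [wsDA]
    conv_lhs => rw [comps_split hp]
    rw [List.map_append, List.map_cons, List.flatten_append, List.flatten_cons]
  rw [hsplit]
  have hchunk : dIW (comps.get ⟨p, hp⟩).1
      ++ (List.ofFn fun j =>
          (List.replicate (c j) (dIW ((comps.get ⟨p, hp⟩).2.get j))).flatten).flatten
      ∈ boundedLang (fA (comps.get ⟨p, hp⟩)) := by
    rw [fA]
    exact mem_boundedLang_cons ⟨1, by simp⟩ (pow_mem_boundedLang_ofFn _ c)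
  have := mem_boundedLang_append
    (mem_boundedLang_nil (xs := ((comps.take p).map fA).flatten))
    (mem_boundedLang_append hchunk
      (mem_boundedLang_nil (xs := ((comps.drop (p + 1)).map fA).flatten)))
  simpa using this

lemma wsDA_dec {ws : List (List A)}
    {comps : List ((Fin ws.length → ℕ) × List (Fin ws.length → ℕ))} :
    ∀ u ∈ wsDA ws comps, ∀ x ∈ u, Instr.isDec x := by
  intro u hu x hxu
  obtain ⟨l, hl, hul⟩ := List.mem_flatten.1 hu
  obtain ⟨e, he, rfl⟩ := List.mem_map.1 hl
  rw [fA] at hul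
  rcases List.mem_cons.1 hul with rfl | hmem
  · obtain ⟨t, rfl⟩ := mem_dIW_elim hxu; trivial
  · obtain ⟨j, rfl⟩ := (List.mem_ofFn).1 hmem
    obtain ⟨t, rfl⟩ := mem_dIW_elim hxu; trivial

lemma csIA_inc {ws : List (List A)} : ∀ x ∈ csIA ws, Instr.isInc x := by
  intro x hx
  obtain ⟨t, rfl⟩ := (List.mem_ofFn).1 hx
  trivial

lemma IA_mem {ws : List (List A)}
    (comps : List ((Fin ws.length → ℕ) × List (Fin ws.length → ℕ))) :
    IA ws comps ∈ famLBiBDd (ws.length + 1) := by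
  refine ⟨⟨csIA ws, wsDA ws comps, csIA_inc, wsDA_dec, rfl⟩, ?_⟩
  intro w hw
  obtain ⟨u, hu, v, hv, rfl⟩ := Language.mem_mul.1 hw
  obtain ⟨ns, rfl⟩ := hu
  obtain ⟨ns', rfl⟩ := hv
  apply incBeforeDec_of_split
  · intro x hx
    exact csIA_inc x (mem_of_mem_lettersPow hx)
  · intro x hx
    obtain ⟨uu, huu, hxuu⟩ := mem_of_mem_wordsPow hx
    exact wsDA_dec uu huu x hxuu

lemma progA_prog {ws : List (List A)}
    {comps : List ((Fin ws.length → ℕ) × List (Fin ws.length → ℕ))} {p : ℕ}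
    (hp : p < comps.length) :
    prog (PLA ws comps) p = progA ws (comps.get ⟨p, hp⟩) := by
  rw [prog_eq _ (by simpa [PLA] using hp)]
  simp [PLA]

lemma satA {ws : List (List A)}
    (comps : List ((Fin ws.length → ℕ) × List (Fin ws.length → ℕ))) :
    (mkM (PLA ws comps)).Satisfies (IA ws comps) := by
  intro w ts ⟨q, hq, hd⟩
  obtain ⟨-, p, hp, α, hα, hinstr, -, -⟩ := accept_sound _ hq hd
  have hp' : p < comps.length := by simpa [PLA] using hp
  rw [progA_prog hp'] at hα
  obtain ⟨c, d, rfl⟩ := memProgA_elim hα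
  erw [hinstr]
  exact instr_memA hp' c d

lemma wfA {ws : List (List A)}
    (comps : List ((Fin ws.length → ℕ) × List (Fin ws.length → ℕ))) :
    (mkM (PLA ws comps)).WellFormed := by
  apply mkM_wellformed
  intro p hp
  have hp' : p < comps.length := by simpa [PLA] using hp
  rw [progA_prog hp']
  refine ⟨List.ofFn fun t : Fin ws.length => ((blockA ws t, true) : PItem (ws.length + 1) A),
    (decW (comps.get ⟨p, hp'⟩).1, false)
      :: (List.ofFn fun j : Fin ((comps.get ⟨p, hp'⟩).2).length =>
          ((decW ((comps.get ⟨p, hp'⟩).2.get j), true) : PItem (ws.length + 1) A)),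
    by rw [progA], ?_, ?_⟩
  · intro it hit a ha x hx
    obtain ⟨t, rfl⟩ := (List.mem_ofFn).1 hit
    have ha' : a ∈ Act.inc (A := A) t.castSucc :: (ws.get t).map Act.read := ha
    rcases List.mem_cons.1 ha' with rfl | hmem
    · simp only [Act.aInstr, List.mem_singleton] at hx
      subst hx; trivial
    · obtain ⟨b, hb, rfl⟩ := List.mem_map.1 hmem
      simp [Act.aInstr] at hx
  · intro it hit a ha x hx
    rcases List.mem_cons.1 hit with rfl | hmem
    · obtain ⟨t, rfl⟩ := mem_decW_elim ha
      simp only [Act.aInstr, List.mem_singleton] at hx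
      subst hx; trivial
    · obtain ⟨j, rfl⟩ := (List.mem_ofFn).1 hmem
      obtain ⟨t, rfl⟩ := mem_decW_elim ha
      simp only [Act.aInstr, List.mem_singleton] at hx
      subst hx; trivial

lemma langA_eq {ws : List (List A)}
    (comps : List ((Fin ws.length → ℕ) × List (Fin ws.length → ℕ))) :
    (mkM (PLA ws comps)).lang
      = {w | ∃ v ∈ {v | ∃ cmp ∈ comps, v ∈ linearSet cmp.1 cmp.2}, w = wordsPow ws v} := by
  apply Set.Subset.antisymm
  · intro w hw
    obtain ⟨ts, q, cnt, hq, hd⟩ := hw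
    obtain ⟨-, p, hp, α, hα, -, hweq, hds⟩ := accept_sound _ hq hd
    have hp' : p < comps.length := by simpa [PLA] using hp
    rw [progA_prog hp'] at hα
    obtain ⟨c, d, rfl⟩ := memProgA_elim hα
    refine ⟨d, ⟨comps.get ⟨p, hp'⟩, List.get_mem _ _, c, ?_⟩, ?_⟩
    · funext t0
      have h1 := hds (t0.castSucc)
      rw [dsum_awordA_castSucc] at h1
      have h2 : (d t0 : ℤ) = (((comps.get ⟨p, hp'⟩).1 t0
          + ∑ j, c j * (comps.get ⟨p, hp'⟩).2.get j t0 : ℕ) : ℤ) := by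
        push_cast
        linarith
      exact_mod_cast h2
    · rw [hweq, inWord_awordA]
  · rintro w ⟨v, ⟨cmp, hcmp, cc, hveq⟩, rfl⟩
    obtain ⟨p, hp, hpe⟩ := List.getElem_of_mem hcmp
    have hget : comps.get ⟨p, hp⟩ = cmp := hpe
    have hα : awordA ws cmp cc v ∈ listLang (prog (PLA ws comps) p) := by
      rw [progA_prog hp, hget]
      exact memProgA_intro cc v
    have htot : ∀ t, dsum (awordA ws cmp cc v) t = 0 := by
      intro t
      refine Fin.lastCases ?_ ?_ t
      · exact dsum_awordA_last cmp cc v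
      · intro t0
        rw [dsum_awordA_castSucc]
        have h2 : (v t0 : ℤ) = (cmp.1 t0 : ℤ) + ∑ j, (cc j : ℤ) * (cmp.2.get j t0 : ℤ) := by
          rw [hveq]; push_cast; ring
        linarith
    have hfeas : ∀ n t, (0 : ℤ) ≤ dsum ((awordA ws cmp cc v).take n) t := by
      rw [awordA]
      apply feas_of_incdec
      · intro a ha t
        obtain ⟨t', ht'⟩ := mem_powOfFn_elim ha
        have ht'' : a ∈ Act.inc (A := A) t'.castSucc :: (ws.get t').map Act.read := ht'
        rcases List.mem_cons.1 ht'' with rfl | hmem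
        · exact aDelta_nonneg_of_not_dec (fun _ => by simp) t
        · obtain ⟨b, hb, rfl⟩ := List.mem_map.1 hmem
          exact aDelta_nonneg_of_not_dec (fun _ => by simp) t
      · intro a ha t
        rcases List.mem_append.1 ha with h1 | h1
        · obtain ⟨t', rfl⟩ := mem_decW_elim h1
          exact aDelta_nonpos_of_not_inc (fun _ => by simp) t
        · obtain ⟨j, hj⟩ := mem_powOfFn_elim h1
          obtain ⟨t', rfl⟩ := mem_decW_elim hj
          exact aDelta_nonpos_of_not_inc (fun _ => by simp) t
      · exact htot
    have := accept_complete (PLA ws comps) (by simpa [PLA] using hp) hα hfeas htot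
    rwa [inWord_awordA] at this

end PM

end Stmt14Aux

/-! ### Statement 14 -/

theorem stmt14 {A : Type} (L : Language A) (h : IsBoundedSemilinear L) :
    L ∈ NCMLang famBDiLBd A ∧ L ∈ NCMLang famLBiBDd A := by
  obtain ⟨ws, hne, Q, ⟨comps, hQ⟩, hL⟩ := h
  subst hQ
  subst hL
  constructor
  · exact ⟨ws.length + 1, Nat.succ_pos _, PM.mkM (PM.PLB ws comps), PM.wfB comps,
      ⟨PM.IB ws comps, PM.IB_mem comps, PM.satB comps⟩, PM.langB_eq comps⟩
  · exact ⟨ws.length + 1, Nat.succ_pos _, PM.mkM (PM.PLA ws comps), PM.wfA comps,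
      ⟨PM.IA ws comps, PM.IA_mem comps, PM.satA comps⟩, PM.langA_eq comps⟩
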